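/- arXiv:2401.05526 — 5 statements merged into one kernel-verified Lean document; each statement's English description precedes it below -/
import Mathlib

section
/- For every function x : ℤ → [0,∞], one has ∑_{j∈ℤ} 2^j · (sup_{k≥j} x_k) ≤ 2 · ∑_{j∈ℤ} 2^j · x_j, where sup_{k≥j} x_k denotes the supremum of x_k over all integers k ≥ j and both sums are taken in the extended nonnegative reals. -/
open ENNReal

def eAux (k : ℤ) : ℕ ≃ ↑{j : ℤ | j ≤ k} where
  toFun n := ⟨k - n, by simp⟩
  invFun j := (k - j).toNat
  left_inv n := by simp
  right_inv j := by
    ext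
    have := j.2
    simp only [Set.mem_setOf_eq] at this
    simp
    omega

lemma geom_sum_half (k : ℤ) :
    ∑' j : ℤ, (if j ≤ k then (2 : ℝ≥0∞) ^ j else 0) = 2 ^ (k + 1) := by
  have h0 : (fun j : ℤ => if j ≤ k then (2 : ℝ≥0∞) ^ j else 0)
      = Set.indicator {j : ℤ | j ≤ k} (fun j => (2 : ℝ≥0∞) ^ j) :=
    funext fun j => by simp [Set.indicator_apply]
  rw [h0, ← tsum_subtype, ← (eAux k).tsum_eq]
  have h1 : ∀ n : ℕ, (2 : ℝ≥0∞) ^ ((((eAux k) n) : ℤ)) = 2 ^ k * 2⁻¹ ^ n := by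
    intro n
    have he : (((eAux k) n : ↑{j : ℤ | j ≤ k}) : ℤ) = k - n := rfl
    rw [he, sub_eq_add_neg, ENNReal.zpow_add two_ne_zero (by norm_num),
      ENNReal.zpow_neg, zpow_natCast, ← ENNReal.inv_pow]
  simp_rw [h1]
  rw [ENNReal.tsum_mul_left, ENNReal.tsum_geometric, ENNReal.one_sub_inv_two, inv_inv,
    ENNReal.zpow_add two_ne_zero (by norm_num), zpow_one]

/-- Goldman–Heinig–Stepanov type inequality: for every `x : ℤ → ℝ≥0∞`,
`∑_{j∈ℤ} 2^j · (sup_{k≥j} x_k) ≤ 2 · ∑_{j∈ℤ} 2^j · x_j`. -/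
theorem stmt_0 (x : ℤ → ℝ≥0∞) :
    ∑' j : ℤ, (2 : ℝ≥0∞) ^ j * ⨆ (k : ℤ) (_ : j ≤ k), x k ≤
      2 * ∑' j : ℤ, (2 : ℝ≥0∞) ^ j * x j := by
  have hsup : ∀ j : ℤ, (⨆ (k : ℤ) (_ : j ≤ k), x k)
      ≤ ∑' k : ℤ, (if j ≤ k then x k else 0) := by
    intro j
    refine iSup₂_le fun k hk => ?_
    have := ENNReal.le_tsum (f := fun k : ℤ => if j ≤ k then x k else 0) k
    simpa [hk] using this
  calc ∑' j : ℤ, (2 : ℝ≥0∞) ^ j * ⨆ (k : ℤ) (_ : j ≤ k), x k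
      ≤ ∑' j : ℤ, (2 : ℝ≥0∞) ^ j * ∑' k : ℤ, (if j ≤ k then x k else 0) :=
        ENNReal.tsum_le_tsum fun j => mul_le_mul_right (hsup j) _
    _ = ∑' j : ℤ, ∑' k : ℤ, (if j ≤ k then (2 : ℝ≥0∞) ^ j * x k else 0) := by
        refine tsum_congr fun j => ?_
        rw [← ENNReal.tsum_mul_left]
        exact tsum_congr fun k => by split <;> simp
    _ = ∑' k : ℤ, ∑' j : ℤ, (if j ≤ k then (2 : ℝ≥0∞) ^ j * x k else 0) :=
        ENNReal.tsum_comm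
    _ = ∑' k : ℤ, 2 * ((2 : ℝ≥0∞) ^ k * x k) := by
        refine tsum_congr fun k => ?_
        have h2 : ∀ j : ℤ, (if j ≤ k then (2 : ℝ≥0∞) ^ j * x k else 0)
            = (if j ≤ k then (2 : ℝ≥0∞) ^ j else 0) * x k := fun j => by
          split <;> simp
        simp_rw [h2]
        rw [ENNReal.tsum_mul_right, geom_sum_half,
          ENNReal.zpow_add two_ne_zero (by norm_num), zpow_one, mul_comm ((2:ℝ≥0∞)^k) 2,
          mul_assoc]
    _ = 2 * ∑' j : ℤ, (2 : ℝ≥0∞) ^ j * x j := ENNReal.tsum_mul_left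
end

section
/- Let 1 < p < ∞. There exist constants c, C > 0, depending only on p, such that for every real sequence x = (x_n)_{n≥1}: c · (∑_{j=0}^∞ 2^{j(1−p)} (∑_{n∈Δ_j} |x_n|)^p)^{1/p} ≤ ‖x‖_{ces_p} ≤ C · (∑_{j=0}^∞ 2^{j(1−p)} (∑_{n∈Δ_j} |x_n|)^p)^{1/p}, as an inequality of values in [0,∞] (in particular one side is finite if and only if the other is). -/
open ENNReal

/-- The Cesàro norm `‖x‖_{ces_p} = (∑_{n=1}^∞ ((1/n)∑_{k=1}^n |x_k|)^p)^{1/p}`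
of a real sequence (indexed so that the entries of the sequence are `x 1, x 2, …`). -/
noncomputable def cesNorm (p : ℝ) (x : ℕ → ℝ) : ℝ≥0∞ :=
  (∑' n : ℕ, (((n : ℝ≥0∞) + 1)⁻¹ * ∑ k ∈ Finset.Icc 1 (n + 1), ENNReal.ofReal |x k|) ^ p) ^ (1 / p)

/-- The block form expression
`(∑_{j=0}^∞ 2^{j(1−p)} (∑_{n ∈ Δ_j} |x_n|)^p)^{1/p}`, where `Δ_j = {n : 2^j ≤ n < 2^{j+1}}`. -/
noncomputable def cesBlock (p : ℝ) (x : ℕ → ℝ) : ℝ≥0∞ :=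
  (∑' j : ℕ, (2 : ℝ≥0∞) ^ ((j : ℝ) * (1 - p)) *
      (∑ n ∈ Finset.Ico (2 ^ j) (2 ^ (j + 1)), ENNReal.ofReal |x n|) ^ p) ^ (1 / p)

namespace CesAux

/-- `w r = 2 ^ r` in `ℝ≥0∞`. -/
noncomputable def w (r : ℝ) : ℝ≥0∞ := (2 : ℝ≥0∞) ^ r

lemma w_add (a b : ℝ) : w (a + b) = w a * w b :=
  ENNReal.rpow_add a b (by norm_num) (by norm_num)

lemma w_natCast (j : ℕ) : w (j : ℝ) = 2 ^ j := ENNReal.rpow_natCast 2 j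

lemma w_neg (a : ℝ) : w (-a) = (w a)⁻¹ := ENNReal.rpow_neg 2 a

lemma w_rpow (a b : ℝ) : w a ^ b = w (a * b) := (ENNReal.rpow_mul 2 a b).symm

lemma w_ne_top (r : ℝ) : w r ≠ ⊤ := by
  rcases le_or_gt 0 r with h | h
  · exact ENNReal.rpow_ne_top_of_nonneg h (by norm_num)
  · rw [show r = -(-r) by ring, w_neg, ne_eq, ENNReal.inv_eq_top]
    exact (ENNReal.rpow_pos (x := (2 : ℝ≥0∞)) (p := -r) (by norm_num) (by norm_num)).ne'

lemma w_ne_zero (r : ℝ) : w r ≠ 0 :=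
  (ENNReal.rpow_pos (by norm_num) (by norm_num)).ne'

lemma w_lt_one {r : ℝ} (h : r < 0) : w r < 1 :=
  ENNReal.rpow_lt_one_of_one_lt_of_neg (by norm_num) h

/-- absolute values as `ℝ≥0∞`. -/
noncomputable def a (x : ℕ → ℝ) (n : ℕ) : ℝ≥0∞ := ENNReal.ofReal |x n|

/-- the `m`-th Cesàro term (before the power is summed). -/
noncomputable def g (p : ℝ) (x : ℕ → ℝ) (m : ℕ) : ℝ≥0∞ :=
  ((m : ℝ≥0∞)⁻¹ * ∑ k ∈ Finset.Icc 1 m, a x k) ^ p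

/-- the `j`-th dyadic block sum of `|x|`. -/
noncomputable def T (x : ℕ → ℝ) (j : ℕ) : ℝ≥0∞ :=
  ∑ n ∈ Finset.Ico (2 ^ j) (2 ^ (j + 1)), a x n

/-- the `j`-th dyadic block sum of Cesàro terms. -/
noncomputable def B (p : ℝ) (x : ℕ → ℝ) (j : ℕ) : ℝ≥0∞ :=
  ∑ m ∈ Finset.Ico (2 ^ j) (2 ^ (j + 1)), g p x m

lemma sum_blocks (f : ℕ → ℝ≥0∞) (J : ℕ) :
    ∑ j ∈ Finset.range J, ∑ m ∈ Finset.Ico (2 ^ j) (2 ^ (j + 1)), f m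
      = ∑ m ∈ Finset.Ico 1 (2 ^ J), f m := by
  induction J with
  | zero => simp
  | succ J ih =>
      rw [Finset.sum_range_succ, ih,
        Finset.sum_Ico_consecutive f (Nat.one_le_two_pow) (Nat.pow_le_pow_right (by norm_num) (by omega))]

lemma tsum_blocks (f : ℕ → ℝ≥0∞) :
    ∑' n : ℕ, f (n + 1) = ∑' j : ℕ, ∑ m ∈ Finset.Ico (2 ^ j) (2 ^ (j + 1)), f m := by
  have h1 : Filter.Tendsto (fun J : ℕ => 2 ^ J - 1) Filter.atTop Filter.atTop := by
    apply Filter.tendsto_atTop_mono (f := fun J : ℕ => J) (fun J => ?_) Filter.tendsto_id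
    show J ≤ 2 ^ J - 1
    have := Nat.lt_two_pow_self (n := J)
    omega
  rw [ENNReal.tsum_eq_iSup_nat' h1 (f := fun n => f (n + 1)), ENNReal.tsum_eq_iSup_nat]
  congr 1
  funext J
  rw [sum_blocks, Finset.sum_Ico_eq_sum_range]
  exact Finset.sum_congr rfl fun i _ => by rw [add_comm]

lemma cesNorm_eq (p : ℝ) (x : ℕ → ℝ) :
    cesNorm p x = (∑' j : ℕ, B p x j) ^ (1 / p) := by
  unfold cesNorm B
  congr 1
  rw [← tsum_blocks (g p x)]
  refine tsum_congr fun n => ?_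
  unfold g a
  push_cast
  ring_nf

lemma cesBlock_eq (p : ℝ) (x : ℕ → ℝ) :
    cesBlock p x = (∑' j : ℕ, w ((j : ℝ) * (1 - p)) * T x j ^ p) ^ (1 / p) := rfl

lemma T_sum (x : ℕ → ℝ) (J : ℕ) :
    ∑ j ∈ Finset.range J, T x j = ∑ m ∈ Finset.Ico 1 (2 ^ J), a x m :=
  sum_blocks (a x) J

/-- Upper bound for a dyadic block of Cesàro terms. -/
lemma B_le (p : ℝ) (hp : 0 ≤ p) (x : ℕ → ℝ) (j : ℕ) :
    B p x j ≤ w ((j : ℝ) * (1 - p)) * (∑ i ∈ Finset.range (j + 1), T x i) ^ p := by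
  set U := ∑ i ∈ Finset.range (j + 1), T x i with hU
  have hterm : ∀ m ∈ Finset.Ico (2 ^ j) (2 ^ (j + 1)), g p x m ≤ ((w j)⁻¹ * U) ^ p := by
    intro m hm
    rw [Finset.mem_Ico] at hm
    apply ENNReal.rpow_le_rpow _ hp
    apply mul_le_mul'
    · rw [w_natCast]
      rw [ENNReal.inv_le_inv]
      exact_mod_cast Nat.cast_le.2 hm.1
    · rw [hU, T_sum]
      apply Finset.sum_le_sum_of_subset
      intro k hk
      rw [Finset.mem_Icc] at hk
      rw [Finset.mem_Ico]
      omega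
  calc B p x j ≤ ∑ m ∈ Finset.Ico (2 ^ j) (2 ^ (j + 1)), ((w j)⁻¹ * U) ^ p :=
        Finset.sum_le_sum hterm
    _ = (2 ^ j : ℕ) * (((w j)⁻¹ * U) ^ p) := by
        rw [Finset.sum_const, Nat.card_Ico, nsmul_eq_mul]
        congr 2
        rw [pow_succ]
        omega
    _ = w ((j : ℝ) * (1 - p)) * U ^ p := by
        push_cast
        rw [← w_natCast j, ← w_neg, ENNReal.mul_rpow_of_nonneg _ _ hp, w_rpow, ← mul_assoc,
          ← w_add]
        congr 2
        ring

/-- Lower bound: block `j+1` of Cesàro terms dominates block `j` of `|x|`. -/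
lemma le_B (p : ℝ) (hp : 0 ≤ p) (x : ℕ → ℝ) (j : ℕ) :
    w (1 - 2 * p) * (w ((j : ℝ) * (1 - p)) * T x j ^ p) ≤ B p x (j + 1) := by
  have hterm : ∀ m ∈ Finset.Ico (2 ^ (j + 1)) (2 ^ (j + 2)),
      ((w (j + 2 : ℕ))⁻¹ * T x j) ^ p ≤ g p x m := by
    intro m hm
    rw [Finset.mem_Ico] at hm
    apply ENNReal.rpow_le_rpow _ hp
    apply mul_le_mul'
    · rw [w_natCast, ENNReal.inv_le_inv]
      exact_mod_cast Nat.cast_le.2 (le_of_lt hm.2)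
    · unfold T
      apply Finset.sum_le_sum_of_subset
      intro k hk
      rw [Finset.mem_Ico] at hk
      rw [Finset.mem_Icc]
      have h1 : (1 : ℕ) ≤ 2 ^ j := Nat.one_le_two_pow
      have h2 : (2 : ℕ) ^ (j + 1) ≤ m := hm.1
      omega
  have hcard : (Finset.Ico (2 ^ (j + 1)) (2 ^ (j + 2))).card = 2 ^ (j + 1) := by
    rw [Nat.card_Ico, pow_succ]
    omega
  calc w (1 - 2 * p) * (w ((j : ℝ) * (1 - p)) * T x j ^ p)
      = (2 ^ (j + 1) : ℕ) * (((w (j + 2 : ℕ))⁻¹ * T x j) ^ p) := by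
        push_cast
        rw [← w_natCast (j + 1), ← w_neg, ENNReal.mul_rpow_of_nonneg _ _ hp, w_rpow,
          ← mul_assoc, ← mul_assoc, ← w_add, ← w_add]
        · push_cast
          congr 2
          ring
    _ ≤ ∑ m ∈ Finset.Ico (2 ^ (j + 1)) (2 ^ (j + 2)), g p x m := by
        have hle := Finset.card_nsmul_le_sum (Finset.Ico (2 ^ (j + 1)) (2 ^ (j + 2)))
          (g p x) _ hterm
        rwa [hcard, nsmul_eq_mul] at hle
    _ = B p x (j + 1) := rfl

set_option maxHeartbeats 1000000 in
lemma tsum_shift (f : ℕ → ℝ≥0∞) (i : ℕ) (h0 : ∀ j < i, f j = 0) :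
    ∑' j : ℕ, f j = ∑' n : ℕ, f (n + i) := by
  have hN : Filter.Tendsto (fun J : ℕ => J + i) Filter.atTop Filter.atTop :=
    Filter.tendsto_atTop_mono (fun J => Nat.le_add_right J i) Filter.tendsto_id
  rw [ENNReal.tsum_eq_iSup_nat' hN, ENNReal.tsum_eq_iSup_nat]
  congr 1
  funext J
  have h1 : ∑ j ∈ Finset.Ico 0 i, f j = 0 :=
    Finset.sum_eq_zero fun j hj => h0 j (Finset.mem_Ico.1 hj).2
  have h2 : ∑ j ∈ Finset.Ico i (J + i), f j = ∑ n ∈ Finset.range J, f (n + i) := by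
    rw [Finset.sum_Ico_eq_sum_range]
    simp only [Nat.add_sub_cancel]
    exact Finset.sum_congr rfl fun n _ => by rw [add_comm]
  rw [Finset.range_eq_Ico, ← Finset.sum_Ico_consecutive f (Nat.zero_le i) (Nat.le_add_left i J),
    h1, zero_add, h2, Finset.range_eq_Ico]

/-- Hardy-type inequality for dyadic weights. -/
lemma hardy (p : ℝ) (hp : 1 < p) (t : ℕ → ℝ≥0∞) :
    ∑' j : ℕ, w ((j : ℝ) * (1 - p)) * (∑ i ∈ Finset.range (j + 1), t i) ^ p
      ≤ ((1 - w (-(1 / 2)))⁻¹ ^ (p - 1) * (1 - w ((1 - p) / 2))⁻¹)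
          * ∑' i : ℕ, w ((i : ℝ) * (1 - p)) * t i ^ p := by
  have hp0 : (0 : ℝ) < p := lt_trans one_pos hp
  have hp0' : (0 : ℝ) ≤ p := le_of_lt hp0
  have hp1 : p - 1 ≠ 0 := by linarith
  have hp0ne : p ≠ 0 := ne_of_gt hp0
  set q : ℝ := p / (p - 1) with hq
  have hpq : p.HolderConjugate q := Real.HolderConjugate.conjExponent hp
  set β : ℝ := (p - 1) / (2 * p) with hβ
  have hβq : β * q = 1 / 2 := by
    rw [hβ, hq]; field_simp
  have hβp : 1 - p + β * p = (1 - p) / 2 := by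
    rw [hβ]; field_simp; ring
  set A : ℝ≥0∞ := (1 - w (-(1 / 2)))⁻¹ with hA
  -- Step 1: per-j Hölder bound
  have step1 : ∀ j : ℕ, (∑ i ∈ Finset.range (j + 1), t i) ^ p
      ≤ A ^ (p - 1) * ∑ i ∈ Finset.range (j + 1), t i ^ p * w (β * p * ((j : ℝ) - i)) := by
    intro j
    have hsplit : ∑ i ∈ Finset.range (j + 1), t i
        = ∑ i ∈ Finset.range (j + 1),
            (t i * w (β * ((j : ℝ) - i))) * w (-(β * ((j : ℝ) - i))) := by
      refine Finset.sum_congr rfl fun i _ => ?_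
      rw [mul_assoc, ← w_add]
      simp [w]
    have hholder := ENNReal.inner_le_Lp_mul_Lq
      (fun i => t i * w (β * ((j : ℝ) - i))) (fun i => w (-(β * ((j : ℝ) - i))))
      (s := Finset.range (j + 1)) hpq
    rw [hsplit]
    have hZ : ∑ i ∈ Finset.range (j + 1), w (-(β * ((j : ℝ) - i))) ^ q ≤ A := by
      have heq : ∀ i ∈ Finset.range (j + 1),
          w (-(β * ((j : ℝ) - i))) ^ q = w (-(1 / 2) * ((j - i : ℕ) : ℝ)) := by
        intro i hi
        rw [Finset.mem_range] at hi
        rw [w_rpow, Nat.cast_sub (show i ≤ j by omega)]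
        congr 1
        rw [show -(β * ((j : ℝ) - i)) * q = -(β * q) * ((j : ℝ) - i) by ring, hβq]
      rw [Finset.sum_congr rfl heq]
      have hrefl := Finset.sum_range_reflect (fun k : ℕ => w (-(1 / 2) * k)) (j + 1)
      simp only [Nat.add_sub_cancel] at hrefl
      rw [hrefl]
      calc ∑ k ∈ Finset.range (j + 1), w (-(1 / 2) * (k : ℝ))
          ≤ ∑' k : ℕ, w (-(1 / 2) * (k : ℝ)) := ENNReal.sum_le_tsum _
        _ = ∑' k : ℕ, (w (-(1 / 2))) ^ (k : ℕ) := by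
            refine tsum_congr fun k => ?_
            rw [← ENNReal.rpow_natCast (w (-(1 / 2))) k, w_rpow]
        _ = A := ENNReal.tsum_geometric _
    calc (∑ i ∈ Finset.range (j + 1), (t i * w (β * ((j : ℝ) - i))) * w (-(β * ((j : ℝ) - i)))) ^ p
        ≤ ((∑ i ∈ Finset.range (j + 1), (t i * w (β * ((j : ℝ) - i))) ^ p) ^ (1 / p)
            * (∑ i ∈ Finset.range (j + 1), w (-(β * ((j : ℝ) - i))) ^ q) ^ (1 / q)) ^ p :=
          ENNReal.rpow_le_rpow hholder hp0'
      _ = (∑ i ∈ Finset.range (j + 1), (t i * w (β * ((j : ℝ) - i))) ^ p)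
            * ((∑ i ∈ Finset.range (j + 1), w (-(β * ((j : ℝ) - i))) ^ q) ^ (p - 1)) := by
          rw [ENNReal.mul_rpow_of_nonneg _ _ hp0', ← ENNReal.rpow_mul, ← ENNReal.rpow_mul,
            one_div_mul_cancel (ne_of_gt hp0), ENNReal.rpow_one]
          congr 2
          rw [hq]
          field_simp
      _ ≤ (∑ i ∈ Finset.range (j + 1), (t i * w (β * ((j : ℝ) - i))) ^ p) * A ^ (p - 1) := by
          exact mul_le_mul_right (ENNReal.rpow_le_rpow hZ (by linarith)) _
      _ = A ^ (p - 1) * ∑ i ∈ Finset.range (j + 1), t i ^ p * w (β * p * ((j : ℝ) - i)) := by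
          rw [mul_comm]
          congr 1
          refine Finset.sum_congr rfl fun i _ => ?_
          rw [ENNReal.mul_rpow_of_nonneg _ _ hp0', w_rpow]
          congr 2
          ring
  -- Step 2: sum over j, swap order, geometric series
  set F : ℕ → ℕ → ℝ≥0∞ := fun i j =>
    if i ≤ j then t i ^ p * w ((j : ℝ) * (1 - p) + β * p * ((j : ℝ) - i)) else 0 with hF
  calc ∑' j : ℕ, w ((j : ℝ) * (1 - p)) * (∑ i ∈ Finset.range (j + 1), t i) ^ p
      ≤ ∑' j : ℕ, A ^ (p - 1) * ∑' i : ℕ, F i j := by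
        refine ENNReal.tsum_le_tsum fun j => ?_
        have hFsum : ∑' i : ℕ, F i j
            = ∑ i ∈ Finset.range (j + 1), t i ^ p * w ((j : ℝ) * (1 - p) + β * p * ((j : ℝ) - i)) := by
          refine (tsum_eq_sum fun i hi => ?_).trans
            (Finset.sum_congr rfl fun i hi => ?_)
          · rw [Finset.mem_range] at hi
            simp only [hF]
            rw [if_neg (show ¬ i ≤ j by omega)]
          · rw [Finset.mem_range] at hi
            simp only [hF]
            rw [if_pos (show i ≤ j by omega)]
        rw [hFsum]
        calc w ((j : ℝ) * (1 - p)) * (∑ i ∈ Finset.range (j + 1), t i) ^ p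
            ≤ w ((j : ℝ) * (1 - p)) *
                (A ^ (p - 1) * ∑ i ∈ Finset.range (j + 1), t i ^ p * w (β * p * ((j : ℝ) - i))) :=
              mul_le_mul_right (step1 j) _
          _ = A ^ (p - 1) * ∑ i ∈ Finset.range (j + 1),
                t i ^ p * w ((j : ℝ) * (1 - p) + β * p * ((j : ℝ) - i)) := by
              simp only [Finset.mul_sum]
              refine Finset.sum_congr rfl fun i _ => ?_
              rw [w_add]
              ring
    _ = A ^ (p - 1) * ∑' i : ℕ, ∑' j : ℕ, F i j := by
        rw [ENNReal.tsum_mul_left, ENNReal.tsum_comm]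
    _ ≤ A ^ (p - 1) * ((1 - w ((1 - p) / 2))⁻¹ * ∑' i : ℕ, w ((i : ℝ) * (1 - p)) * t i ^ p) := by
        refine mul_le_mul_right ?_ _
        rw [← ENNReal.tsum_mul_left]
        refine ENNReal.tsum_le_tsum fun i => le_of_eq ?_
        have htail : ∑' j : ℕ, F i j = ∑' n : ℕ, F i (n + i) := by
          refine tsum_shift (fun j => F i j) i fun j hj => ?_
          simp only [hF]
          rw [if_neg (show ¬ i ≤ j by omega)]
        rw [htail]
        have hterm : ∀ n : ℕ, F i (n + i)
            = (t i ^ p * w ((i : ℝ) * (1 - p))) * (w ((1 - p) / 2)) ^ (n : ℕ) := by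
          intro n
          simp only [hF]
          rw [if_pos (Nat.le_add_left i n)]
          rw [← ENNReal.rpow_natCast (w ((1 - p) / 2)) n, w_rpow,
            mul_assoc (t i ^ p) (w ((i : ℝ) * (1 - p))), ← w_add]
          congr 2
          push_cast
          rw [show ((1 : ℝ) - p) / 2 * n = (1 - p + β * p) * n by rw [hβp]]
          ring
        rw [tsum_congr hterm, ENNReal.tsum_mul_left, ENNReal.tsum_geometric]
        ring
    _ = ((1 - w (-(1 / 2)))⁻¹ ^ (p - 1) * (1 - w ((1 - p) / 2))⁻¹)
          * ∑' i : ℕ, w ((i : ℝ) * (1 - p)) * t i ^ p := by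
        rw [hA, mul_assoc]

end CesAux

open CesAux in
/-- Block form representation of `ces_p` (Grosse-Erdmann). -/
theorem stmt_1 (p : ℝ) (hp : 1 < p) :
    ∃ c C : ℝ, 0 < c ∧ 0 < C ∧ ∀ x : ℕ → ℝ,
      ENNReal.ofReal c * cesBlock p x ≤ cesNorm p x ∧
        cesNorm p x ≤ ENNReal.ofReal C * cesBlock p x := by
  have hp0 : (0 : ℝ) < p := lt_trans one_pos hp
  have hp0' : (0 : ℝ) ≤ p := le_of_lt hp0
  have hp0ne : p ≠ 0 := ne_of_gt hp0
  -- the constants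
  set K : ℝ≥0∞ := (1 - w (-(1 / 2)))⁻¹ ^ (p - 1) * (1 - w ((1 - p) / 2))⁻¹ with hK
  have hKtop : K ≠ ⊤ := by
    have h1 : (1 - w (-(1 / 2)))⁻¹ ≠ ⊤ := by
      rw [ne_eq, ENNReal.inv_eq_top, tsub_eq_zero_iff_le]
      exact not_le.2 (w_lt_one (by norm_num))
    have h2 : (1 - w ((1 - p) / 2))⁻¹ ≠ ⊤ := by
      rw [ne_eq, ENNReal.inv_eq_top, tsub_eq_zero_iff_le]
      exact not_le.2 (w_lt_one (by linarith))
    exact ENNReal.mul_ne_top (ENNReal.rpow_ne_top_of_nonneg (by linarith) h1) h2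
  have hK1top : K ^ (1 / p) ≠ ⊤ :=
    ENNReal.rpow_ne_top_of_nonneg (by positivity) hKtop
  refine ⟨(w ((1 - 2 * p) / p)).toReal, (K ^ (1 / p)).toReal + 1, ?_, ?_, ?_⟩
  · exact ENNReal.toReal_pos (w_ne_zero _) (w_ne_top _)
  · positivity
  intro x
  have hW : cesBlock p x = (∑' j : ℕ, w ((j : ℝ) * (1 - p)) * T x j ^ p) ^ (1 / p) :=
    cesBlock_eq p x
  set W : ℝ≥0∞ := ∑' j : ℕ, w ((j : ℝ) * (1 - p)) * T x j ^ p with hWdef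
  constructor
  · -- lower bound
    rw [ENNReal.ofReal_toReal (w_ne_top _), hW, cesNorm_eq]
    have h1 : w ((1 - 2 * p) / p) = (w (1 - 2 * p)) ^ (1 / p) := by
      rw [w_rpow]
      congr 1
      field_simp
    rw [h1, ← ENNReal.mul_rpow_of_nonneg _ _ (by positivity)]
    apply ENNReal.rpow_le_rpow _ (by positivity)
    calc w (1 - 2 * p) * W = ∑' j : ℕ, w (1 - 2 * p) * (w ((j : ℝ) * (1 - p)) * T x j ^ p) :=
          (ENNReal.tsum_mul_left).symm
      _ ≤ ∑' j : ℕ, B p x (j + 1) := ENNReal.tsum_le_tsum fun j => le_B p hp0' x j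
      _ ≤ ∑' j : ℕ, B p x j :=
          ENNReal.tsum_comp_le_tsum_of_injective Nat.succ_injective (B p x)
  · -- upper bound
    rw [cesNorm_eq, hW]
    calc (∑' j : ℕ, B p x j) ^ (1 / p)
        ≤ (∑' j : ℕ, w ((j : ℝ) * (1 - p)) * (∑ i ∈ Finset.range (j + 1), T x i) ^ p) ^ (1 / p) :=
          ENNReal.rpow_le_rpow (ENNReal.tsum_le_tsum fun j => B_le p hp0' x j) (by positivity)
      _ ≤ (K * W) ^ (1 / p) :=
          ENNReal.rpow_le_rpow (hardy p hp (T x)) (by positivity)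
      _ = K ^ (1 / p) * W ^ (1 / p) := ENNReal.mul_rpow_of_nonneg _ _ (by positivity)
      _ ≤ ENNReal.ofReal ((K ^ (1 / p)).toReal + 1) * W ^ (1 / p) := by
          gcongr
          calc K ^ (1 / p) = ENNReal.ofReal ((K ^ (1 / p)).toReal) :=
                (ENNReal.ofReal_toReal hK1top).symm
            _ ≤ ENNReal.ofReal ((K ^ (1 / p)).toReal + 1) :=
                ENNReal.ofReal_le_ofReal (by linarith)
end

section
/- Let 1 < p < ∞ and define, for a Lebesgue-measurable nonnegative f : (0,∞) → ℝ, the Hardy average (ℋf)(x) = (1/x)∫_0^x f(t) dt. There exist constants c, C > 0, depending only on p, such that for every such f: c · ‖f‖_{Ces_p} ≤ ‖ℋf‖_{Ces_p} ≤ C · ‖f‖_{Ces_p}, as an inequality of values in [0,∞]. In particular, ‖f‖_{Ces_p} is finite if and only if ‖ℋf‖_{Ces_p} is finite. -/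
open ENNReal MeasureTheory

open Set


lemma lintegralA {a x : ℝ} (ha : -1 < a) (hx : 0 ≤ x) :
    ∫⁻ t in Ioc (0:ℝ) x, (ENNReal.ofReal t) ^ a = ENNReal.ofReal (x ^ (a+1) / (a+1)) := by
  have h1 : ∀ t ∈ Ioc (0:ℝ) x, (ENNReal.ofReal t) ^ a = ENNReal.ofReal (t ^ a) := fun t ht =>
    ENNReal.ofReal_rpow_of_pos ht.1
  rw [setLIntegral_congr_fun measurableSet_Ioc h1]
  rw [← ofReal_integral_eq_lintegral_ofReal
      ((intervalIntegral.intervalIntegrable_rpow' ha).1)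
      ((ae_restrict_iff' measurableSet_Ioc).mpr (Filter.Eventually.of_forall
        fun t ht => Real.rpow_nonneg ht.1.le a))]
  congr 1
  rw [← intervalIntegral.integral_of_le hx, integral_rpow (Or.inl ha),
    Real.zero_rpow (by linarith), sub_zero]

lemma lintegralB {b t : ℝ} (hb : b < -1) (ht : 0 < t) :
    ∫⁻ x in Ioi t, (ENNReal.ofReal x) ^ b = ENNReal.ofReal (t ^ (b+1) / (-(b+1))) := by
  have h1 : ∀ x ∈ Ioi t, (ENNReal.ofReal x) ^ b = ENNReal.ofReal (x ^ b) := fun x hx =>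
    ENNReal.ofReal_rpow_of_pos (ht.trans hx)
  rw [setLIntegral_congr_fun measurableSet_Ioi h1]
  rw [← ofReal_integral_eq_lintegral_ofReal (integrableOn_Ioi_rpow_of_lt hb ht)
      ((ae_restrict_iff' measurableSet_Ioi).mpr (Filter.Eventually.of_forall
        fun x hx => Real.rpow_nonneg (ht.trans hx).le b))]
  rw [integral_Ioi_rpow_of_lt hb ht]
  congr 1
  rw [div_neg, neg_div]

lemma hardy {p q : ℝ} (hp : 1 < p) (hq : q = p/(p-1)) {φ : ℝ → ℝ≥0∞} (hφ : Measurable φ) :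
    ∫⁻ x in Ioi (0:ℝ), ((ENNReal.ofReal x)⁻¹ * ∫⁻ t in Ioc (0:ℝ) x, φ t) ^ p
      ≤ (ENNReal.ofReal q) ^ p * ∫⁻ t in Ioi (0:ℝ), (φ t) ^ p := by
  have hp0 : (0:ℝ) < p := by linarith
  have hq1 : 1 < q := by rw [hq]; rw [lt_div_iff₀ (by linarith)]; linarith
  have hq0 : (0:ℝ) < q := by linarith
  have hpq : p.HolderConjugate q := (Real.holderConjugate_iff_eq_conjExponent hp).mpr hq
  have hpne : p ≠ 0 := ne_of_gt hp0
  have hp1ne : p - 1 ≠ 0 := by linarith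
  have hqinv : q⁻¹ = 1 - p⁻¹ := by
    have := hpq.inv_add_inv_eq_inv; rw [inv_one] at this; linarith
  have hpinv1 : p⁻¹ < 1 := by
    rw [inv_lt_one_iff₀]; right; exact hp
  set e : ℝ := p⁻¹ * q⁻¹ with he
  set β : ℝ := p⁻¹ - 2 with hβ
  set h : ℝ → ℝ≥0∞ := fun t => (φ t) ^ p * (ENNReal.ofReal t) ^ q⁻¹ with hh
  have hhm : Measurable h := by
    exact ((hφ.pow_const _).mul ((ENNReal.measurable_ofReal.comp measurable_id).pow_const _))
  set A : ℝ → ℝ≥0∞ := fun x => ∫⁻ t in Ioc (0:ℝ) x, h t with hA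
  set Q : ℝ≥0∞ := ENNReal.ofReal q with hQ
  have hQ0 : Q ≠ 0 := (ENNReal.ofReal_pos.mpr hq0).ne'
  have hQt : Q ≠ ⊤ := ENNReal.ofReal_ne_top
  have key : ∀ x ∈ Ioi (0:ℝ),
      ((ENNReal.ofReal x)⁻¹ * ∫⁻ t in Ioc (0:ℝ) x, φ t) ^ p
        ≤ Q ^ (p-1) * ((ENNReal.ofReal x) ^ β * A x) := by
    intro x hx
    simp only [mem_Ioi] at hx
    set X : ℝ≥0∞ := ENNReal.ofReal x with hX
    have hX0 : X ≠ 0 := (ENNReal.ofReal_pos.mpr hx).ne'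
    have hXt : X ≠ ⊤ := ENNReal.ofReal_ne_top
    have hsplit : ∀ t ∈ Ioc (0:ℝ) x,
        φ t = (φ t * (ENNReal.ofReal t) ^ e) * (ENNReal.ofReal t) ^ (-e) := by
      intro t ht
      rw [mul_assoc, ← ENNReal.rpow_add _ _ (ENNReal.ofReal_pos.mpr ht.1).ne'
        ENNReal.ofReal_ne_top, add_neg_cancel, ENNReal.rpow_zero, mul_one]
    have hold : ∫⁻ t in Ioc (0:ℝ) x, φ t
        ≤ (∫⁻ t in Ioc (0:ℝ) x, (φ t * (ENNReal.ofReal t) ^ e) ^ p) ^ (1/p)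
          * (∫⁻ t in Ioc (0:ℝ) x, ((ENNReal.ofReal t) ^ (-e)) ^ q) ^ (1/q) := by
      rw [setLIntegral_congr_fun measurableSet_Ioc hsplit]
      exact ENNReal.lintegral_mul_le_Lp_mul_Lq _ hpq
        (hφ.mul ((ENNReal.measurable_ofReal.comp measurable_id).pow_const _)).aemeasurable
        ((ENNReal.measurable_ofReal.comp measurable_id).pow_const _).aemeasurable
    have fact1 : ∫⁻ t in Ioc (0:ℝ) x, (φ t * (ENNReal.ofReal t) ^ e) ^ p = A x := by
      refine setLIntegral_congr_fun measurableSet_Ioc ?_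
      intro t ht
      beta_reduce
      rw [ENNReal.mul_rpow_of_nonneg _ _ hp0.le, ← ENNReal.rpow_mul,
        show e * p = q⁻¹ by rw [he]; field_simp]
    have fact2 : ∫⁻ t in Ioc (0:ℝ) x, ((ENNReal.ofReal t) ^ (-e)) ^ q = Q * X ^ q⁻¹ := by
      have : ∀ t ∈ Ioc (0:ℝ) x, ((ENNReal.ofReal t) ^ (-e)) ^ q = (ENNReal.ofReal t) ^ (-p⁻¹) := by
        intro t ht
        rw [← ENNReal.rpow_mul, show -e * q = -p⁻¹ by rw [he]; field_simp]
      rw [setLIntegral_congr_fun measurableSet_Ioc this,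
        lintegralA (by linarith : (-1:ℝ) < -p⁻¹) hx.le,
        show -p⁻¹ + 1 = q⁻¹ by linarith]
      rw [div_eq_mul_inv, inv_inv, ENNReal.ofReal_mul (Real.rpow_nonneg hx.le _),
        ENNReal.ofReal_rpow_of_pos hx, mul_comm]
    calc ((X)⁻¹ * ∫⁻ t in Ioc (0:ℝ) x, φ t) ^ p
        ≤ (X⁻¹ * ((A x) ^ (1/p) * (Q * X ^ q⁻¹) ^ (1/q))) ^ p := by
          apply ENNReal.rpow_le_rpow _ hp0.le
          apply mul_le_mul_right
          rw [← fact1, ← fact2]; exact hold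
      _ = Q ^ (p-1) * (X ^ β * A x) := by
          rw [← ENNReal.rpow_neg_one X,
            ENNReal.mul_rpow_of_nonneg _ _ (by positivity : (0:ℝ) ≤ 1/q),
            ← ENNReal.rpow_mul,
            ENNReal.mul_rpow_of_nonneg _ _ hp0.le,
            ENNReal.mul_rpow_of_nonneg _ _ hp0.le,
            ENNReal.mul_rpow_of_nonneg _ _ hp0.le,
            ← ENNReal.rpow_mul, ← ENNReal.rpow_mul, ← ENNReal.rpow_mul, ← ENNReal.rpow_mul,
            show (1/p) * p = 1 by field_simp,
            show (1/q) * p = p - 1 by rw [hq]; field_simp,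
            show (-1:ℝ) * p = -p by ring, ENNReal.rpow_one]
          rw [show β = -p + q⁻¹ * (1/q) * p by rw [hβ, hq]; field_simp; ring,
            ENNReal.rpow_add _ _ hX0 hXt]
          ring
  have monA : Monotone A := fun a b hab =>
    lintegral_mono' (Measure.restrict_mono (Ioc_subset_Ioc_right hab) le_rfl) le_rfl
  have hAm : Measurable A := monA.measurable
  have hβlt : β < -1 := by rw [hβ]; linarith
  have swap : ∫⁻ x in Ioi (0:ℝ), (ENNReal.ofReal x) ^ β * A x
      = Q * ∫⁻ t in Ioi (0:ℝ), (φ t) ^ p := by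
    set G : ℝ → ℝ → ℝ≥0∞ := fun x t => (Iic x).indicator
      (fun t => (ENNReal.ofReal x) ^ β * h t) t with hG
    have hGm : AEMeasurable (Function.uncurry G)
        ((volume.restrict (Ioi (0:ℝ))).prod (volume.restrict (Ioi (0:ℝ)))) := by
      have : Function.uncurry G = Set.indicator {z : ℝ × ℝ | z.2 ≤ z.1}
          (fun z => (ENNReal.ofReal z.1) ^ β * h z.2) := by
        ext z
        simp only [Function.uncurry, hG, Set.indicator_apply, Set.mem_Iic, Set.mem_setOf_eq]
      rw [this]
      exact (Measurable.indicator
        (((ENNReal.measurable_ofReal.comp measurable_fst).pow_const _).mul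
          (hhm.comp measurable_snd))
        (measurableSet_le measurable_snd measurable_fst)).aemeasurable
    have step1 : ∀ x : ℝ, (ENNReal.ofReal x) ^ β * A x = ∫⁻ t in Ioi (0:ℝ), G x t := by
      intro x
      rw [hG, lintegral_indicator measurableSet_Iic,
        Measure.restrict_restrict measurableSet_Iic,
        show Iic x ∩ Ioi (0:ℝ) = Ioc 0 x by rw [Set.inter_comm, Set.Ioi_inter_Iic],
        lintegral_const_mul _ hhm]
    have step2 : ∀ t ∈ Ioi (0:ℝ), ∫⁻ x in Ioi (0:ℝ), G x t = Q * (φ t) ^ p := by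
      intro t ht
      simp only [mem_Ioi] at ht
      have ht0 : (ENNReal.ofReal t) ≠ 0 := (ENNReal.ofReal_pos.mpr ht).ne'
      have hGt : ∀ x : ℝ, G x t = (Ici t).indicator
          (fun x => (ENNReal.ofReal x) ^ β * h t) x := by
        intro x
        simp only [hG, Set.indicator_apply, Set.mem_Iic, Set.mem_Ici]
      rw [setLIntegral_congr_fun measurableSet_Ioi
        (fun x _ => hGt x),
        lintegral_indicator measurableSet_Ici,
        Measure.restrict_restrict measurableSet_Ici,
        show Ici t ∩ Ioi (0:ℝ) = Ici t from Set.inter_eq_left.mpr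
          (fun y hy => lt_of_lt_of_le ht hy),
        Measure.restrict_congr_set Ioi_ae_eq_Ici.symm,
        lintegral_mul_const _ (ENNReal.measurable_ofReal.pow_const _),
        lintegralB hβlt ht,
        show β + 1 = -q⁻¹ by rw [hβ, hqinv]; ring, neg_neg,
        div_eq_mul_inv, inv_inv, ENNReal.ofReal_mul (Real.rpow_nonneg ht.le _),
        ← ENNReal.ofReal_rpow_of_pos ht]
      have hcancel : (ENNReal.ofReal t) ^ (-q⁻¹) * (ENNReal.ofReal t) ^ q⁻¹ = 1 := by
        rw [← ENNReal.rpow_add _ _ ht0 ENNReal.ofReal_ne_top, neg_add_cancel,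
          ENNReal.rpow_zero]
      calc (ENNReal.ofReal t) ^ (-q⁻¹) * Q * h t
          = Q * (φ t) ^ p * ((ENNReal.ofReal t) ^ (-q⁻¹) * (ENNReal.ofReal t) ^ q⁻¹) := by
            rw [hh]; ring
        _ = Q * (φ t) ^ p := by rw [hcancel, mul_one]
    rw [setLIntegral_congr_fun measurableSet_Ioi
        (fun x _ => step1 x),
      lintegral_lintegral_swap hGm,
      setLIntegral_congr_fun measurableSet_Ioi
        step2,
      lintegral_const_mul _ (hφ.pow_const _)]
  calc ∫⁻ x in Ioi (0:ℝ), ((ENNReal.ofReal x)⁻¹ * ∫⁻ t in Ioc (0:ℝ) x, φ t) ^ p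
      ≤ ∫⁻ x in Ioi (0:ℝ), Q ^ (p-1) * ((ENNReal.ofReal x) ^ β * A x) :=
        setLIntegral_mono (measurable_const.mul
          ((ENNReal.measurable_ofReal.pow_const _).mul hAm)) key
    _ = Q ^ (p-1) * ∫⁻ x in Ioi (0:ℝ), (ENNReal.ofReal x) ^ β * A x :=
        lintegral_const_mul _ ((ENNReal.measurable_ofReal.pow_const _).mul hAm)
    _ = Q ^ (p-1) * (Q * ∫⁻ t in Ioi (0:ℝ), (φ t) ^ p) := by rw [swap]
    _ = Q ^ p * ∫⁻ t in Ioi (0:ℝ), (φ t) ^ p := by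
        rw [← mul_assoc]
        congr 1
        nth_rewrite 2 [← ENNReal.rpow_one Q]
        rw [← ENNReal.rpow_add _ _ hQ0 hQt, sub_add_cancel]


lemma lintegral_half {ψ : ℝ → ℝ≥0∞} (hψ : Measurable ψ) :
    ∫⁻ x in Ioi (0:ℝ), ψ (x/2) = 2 * ∫⁻ u in Ioi (0:ℝ), ψ u := by
  have hS : Measurable (fun x : ℝ => (2:ℝ)⁻¹ * x) := measurable_id.const_mul _
  have hpre : (fun x : ℝ => (2:ℝ)⁻¹ * x) ⁻¹' (Ioi 0) = Ioi 0 := by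
    ext y; simp only [mem_preimage, mem_Ioi]
    constructor <;> intro hy <;> nlinarith
  have hmap : Measure.map (fun x : ℝ => (2:ℝ)⁻¹ * x) (volume.restrict (Ioi (0:ℝ)))
      = (ENNReal.ofReal 2) • (volume.restrict (Ioi (0:ℝ))) := by
    rw [← hpre, ← Measure.restrict_map hS measurableSet_Ioi,
      Real.map_volume_mul_left (by norm_num : ((2:ℝ)⁻¹) ≠ 0)]
    rw [Measure.restrict_smul]
    norm_num
  calc ∫⁻ x in Ioi (0:ℝ), ψ (x/2)
      = ∫⁻ x in Ioi (0:ℝ), ψ ((2:ℝ)⁻¹ * x) := by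
        apply lintegral_congr; intro x; rw [div_eq_inv_mul]
    _ = ∫⁻ y, ψ y ∂(Measure.map (fun x : ℝ => (2:ℝ)⁻¹ * x) (volume.restrict (Ioi (0:ℝ)))) :=
        (lintegral_map hψ hS).symm
    _ = 2 * ∫⁻ u in Ioi (0:ℝ), ψ u := by
        rw [hmap, lintegral_smul_measure]
        norm_num

/-- The Cesàro norm `(∫_0^∞ ((1/x)∫_0^x g(t) dt)^p dx)^{1/p}` of an `[0,∞]`-valued
function on `(0,∞)`, with all integrals Lebesgue integrals. -/
noncomputable def CesNormE (p : ℝ) (g : ℝ → ℝ≥0∞) : ℝ≥0∞ :=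
  (∫⁻ x in Set.Ioi (0 : ℝ),
      ((ENNReal.ofReal x)⁻¹ * ∫⁻ t in Set.Ioc (0 : ℝ) x, g t) ^ p) ^ (1 / p)

/-- The Hardy average `(ℋf)(x) = (1/x)∫_0^x f(t) dt` of a nonnegative function. -/
noncomputable def hardyAvg (f : ℝ → ℝ) : ℝ → ℝ≥0∞ :=
  fun x => (ENNReal.ofReal x)⁻¹ * ∫⁻ t in Set.Ioc (0 : ℝ) x, ENNReal.ofReal (f t)

/-- The function-space case of `𝒞𝒞X = 𝒞X`: for nonnegative measurable `f`,
`‖ℋf‖_{Ces_p}` and `‖f‖_{Ces_p}` are two-sidedly comparable. -/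
theorem stmt_7 (p : ℝ) (hp : 1 < p) :
    ∃ c C : ℝ, 0 < c ∧ 0 < C ∧ ∀ f : ℝ → ℝ, Measurable f → (∀ t, 0 ≤ f t) →
      ENNReal.ofReal c * CesNormE p (fun t => ENNReal.ofReal (f t)) ≤
          CesNormE p (hardyAvg f) ∧
        CesNormE p (hardyAvg f) ≤
          ENNReal.ofReal C * CesNormE p (fun t => ENNReal.ofReal (f t)) := by
  have hp0 : (0:ℝ) < p := by linarith
  refine ⟨1/4, p/(p-1), by norm_num, div_pos hp0 (by linarith), ?_⟩
  intro f hf hf0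
  set g : ℝ → ℝ≥0∞ := fun t => ENNReal.ofReal (f t) with hg
  have hgm : Measurable g := ENNReal.measurable_ofReal.comp hf
  set φ : ℝ → ℝ≥0∞ := hardyAvg f with hφdef
  have monI : Monotone (fun x => ∫⁻ t in Ioc (0:ℝ) x, g t) := fun a b hab =>
    lintegral_mono' (Measure.restrict_mono (Ioc_subset_Ioc_right hab) le_rfl) le_rfl
  have hφ : Measurable φ := by
    exact (ENNReal.measurable_ofReal.comp measurable_id).inv.mul monI.measurable
  have monJ : Monotone (fun x => ∫⁻ t in Ioc (0:ℝ) x, φ t) := fun a b hab =>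
    lintegral_mono' (Measure.restrict_mono (Ioc_subset_Ioc_right hab) le_rfl) le_rfl
  have hHm : Measurable (fun x => ((ENNReal.ofReal x)⁻¹ * ∫⁻ t in Ioc (0:ℝ) x, φ t) ^ p) :=
    (((ENNReal.measurable_ofReal.comp measurable_id).inv.mul monJ.measurable).pow_const _)
  have hpinv : (0:ℝ) < 1/p := by positivity
  have cesg : CesNormE p g = (∫⁻ x in Ioi (0:ℝ), (φ x) ^ p) ^ (1/p) := rfl
  have cesH : CesNormE p (hardyAvg f)
      = (∫⁻ x in Ioi (0:ℝ), ((ENNReal.ofReal x)⁻¹ * ∫⁻ t in Ioc (0:ℝ) x, φ t) ^ p) ^ (1/p) := rfl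
  constructor
  · -- lower bound
    have ptw : ∀ x ∈ Ioi (0:ℝ),
        ENNReal.ofReal (1/4 : ℝ) * φ (x/2) ≤ (ENNReal.ofReal x)⁻¹ * ∫⁻ t in Ioc (0:ℝ) x, φ t := by
      intro x hx
      simp only [mem_Ioi] at hx
      have hx2 : 0 < x/2 := by linarith
      set Y : ℝ≥0∞ := ENNReal.ofReal (x/2) with hY
      have hY0 : Y ≠ 0 := (ENNReal.ofReal_pos.mpr hx2).ne'
      have hYt : Y ≠ ⊤ := ENNReal.ofReal_ne_top
      set I : ℝ≥0∞ := ∫⁻ t in Ioc (0:ℝ) (x/2), g t with hI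
      have hXY : ENNReal.ofReal x = 2 * Y := by
        rw [hY, show x = 2 * (x/2) by ring, ENNReal.ofReal_mul (by norm_num)]
        norm_num
      have step1 : (ENNReal.ofReal x)⁻¹ * I * Y ≤ ∫⁻ t in Ioc (0:ℝ) x, φ t := by
        calc (ENNReal.ofReal x)⁻¹ * I * Y
            = ∫⁻ _ in Ioc (x/2) x, ((ENNReal.ofReal x)⁻¹ * I) := by
              rw [setLIntegral_const, Real.volume_Ioc, show x - x/2 = x/2 by ring]
          _ ≤ ∫⁻ t in Ioc (x/2) x, φ t := by
              refine setLIntegral_mono hφ ?_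
              intro t ht
              show (ENNReal.ofReal x)⁻¹ * I ≤ (ENNReal.ofReal t)⁻¹ * _
              refine mul_le_mul' ?_ ?_
              · exact ENNReal.inv_le_inv.mpr (ENNReal.ofReal_le_ofReal ht.2)
              · exact monI ht.1.le
          _ ≤ ∫⁻ t in Ioc (0:ℝ) x, φ t :=
              lintegral_mono' (Measure.restrict_mono (Ioc_subset_Ioc_left hx2.le) le_rfl) le_rfl
      have hfourth : ENNReal.ofReal (1/4 : ℝ) = 2⁻¹ * 2⁻¹ := by
        rw [show (1/4:ℝ) = (1/2)*(1/2) by norm_num, ENNReal.ofReal_mul (by norm_num),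
          show (1/2:ℝ) = 2⁻¹ by norm_num, ENNReal.ofReal_inv_of_pos (by norm_num)]
        norm_num
      have key : (ENNReal.ofReal x)⁻¹ * ((ENNReal.ofReal x)⁻¹ * I * Y)
          = ENNReal.ofReal (1/4 : ℝ) * φ (x/2) := by
        have hφx2 : φ (x/2) = Y⁻¹ * I := rfl
        rw [hφx2, hXY, ENNReal.mul_inv (Or.inl (by norm_num)) (Or.inl (by norm_num)), hfourth]
        calc 2⁻¹ * Y⁻¹ * (2⁻¹ * Y⁻¹ * I * Y)
            = (2⁻¹ * 2⁻¹) * (Y⁻¹ * I) * (Y⁻¹ * Y) := by ring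
          _ = 2⁻¹ * 2⁻¹ * (Y⁻¹ * I) := by rw [ENNReal.inv_mul_cancel hY0 hYt, mul_one]
      rw [← key]
      exact mul_le_mul_right step1 _
    have low : (ENNReal.ofReal (1/4 : ℝ)) ^ p * ∫⁻ x in Ioi (0:ℝ), (φ x) ^ p
        ≤ ∫⁻ x in Ioi (0:ℝ), ((ENNReal.ofReal x)⁻¹ * ∫⁻ t in Ioc (0:ℝ) x, φ t) ^ p := by
      calc (ENNReal.ofReal (1/4 : ℝ)) ^ p * ∫⁻ x in Ioi (0:ℝ), (φ x) ^ p
          ≤ (ENNReal.ofReal (1/4 : ℝ)) ^ p * (2 * ∫⁻ x in Ioi (0:ℝ), (φ x) ^ p) :=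
            mul_le_mul_right (le_mul_of_one_le_left zero_le one_le_two) _
        _ = (ENNReal.ofReal (1/4 : ℝ)) ^ p * ∫⁻ x in Ioi (0:ℝ), (φ (x/2)) ^ p := by
            rw [lintegral_half (hφ.pow_const _)]
        _ = ∫⁻ x in Ioi (0:ℝ), (ENNReal.ofReal (1/4 : ℝ) * φ (x/2)) ^ p := by
            have hm2 : Measurable fun x : ℝ => φ (x/2) ^ p := by fun_prop
            rw [← lintegral_const_mul _ hm2]
            apply lintegral_congr
            intro x
            rw [ENNReal.mul_rpow_of_nonneg _ _ hp0.le]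
        _ ≤ ∫⁻ x in Ioi (0:ℝ), ((ENNReal.ofReal x)⁻¹ * ∫⁻ t in Ioc (0:ℝ) x, φ t) ^ p :=
            setLIntegral_mono hHm (fun x hx => ENNReal.rpow_le_rpow (ptw x hx) hp0.le)
    rw [cesg, cesH]
    calc ENNReal.ofReal (1/4 : ℝ) * (∫⁻ x in Ioi (0:ℝ), (φ x) ^ p) ^ (1/p)
        = ((ENNReal.ofReal (1/4 : ℝ)) ^ p * ∫⁻ x in Ioi (0:ℝ), (φ x) ^ p) ^ (1/p) := by
          rw [ENNReal.mul_rpow_of_nonneg _ _ hpinv.le, ← ENNReal.rpow_mul,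
            mul_one_div_cancel hp0.ne', ENNReal.rpow_one]
      _ ≤ (∫⁻ x in Ioi (0:ℝ), ((ENNReal.ofReal x)⁻¹ * ∫⁻ t in Ioc (0:ℝ) x, φ t) ^ p) ^ (1/p) :=
          ENNReal.rpow_le_rpow low hpinv.le
  · -- upper bound
    rw [cesg, cesH]
    calc (∫⁻ x in Ioi (0:ℝ), ((ENNReal.ofReal x)⁻¹ * ∫⁻ t in Ioc (0:ℝ) x, φ t) ^ p) ^ (1/p)
        ≤ ((ENNReal.ofReal (p/(p-1))) ^ p * ∫⁻ x in Ioi (0:ℝ), (φ x) ^ p) ^ (1/p) :=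
          ENNReal.rpow_le_rpow (hardy hp rfl hφ) hpinv.le
      _ = ENNReal.ofReal (p/(p-1)) * (∫⁻ x in Ioi (0:ℝ), (φ x) ^ p) ^ (1/p) := by
          rw [ENNReal.mul_rpow_of_nonneg _ _ hpinv.le, ← ENNReal.rpow_mul,
            mul_one_div_cancel hp0.ne', ENNReal.rpow_one]
end

section
/- Let 1 < p < ∞ and let q satisfy 1/p + 1/q = 1. There exist constants c, C > 0, depending only on p, such that for every real sequence z = (z_n)_{n≥1}: c · ‖z‖_{g_q} ≤ sup{ ‖z·x‖_{ces_p} : x a real sequence with ‖x‖_{ℓ_p} ≤ 1 } ≤ C · ‖z‖_{g_q}, where z·x denotes the coordinatewise product and all quantities take values in [0,∞]. -/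
open ENNReal Finset

/-- The `ℓ_p` norm `‖x‖_{ℓ_p} = (∑_{n=1}^∞ |x_n|^p)^{1/p}` of a real sequence
(indexed so that the entries of the sequence are `x 1, x 2, …`). -/
noncomputable def lpSeqNorm (p : ℝ) (x : ℕ → ℝ) : ℝ≥0∞ :=
  (∑' n : ℕ, ENNReal.ofReal |x (n + 1)| ^ p) ^ (1 / p)

/-- Bennett's norm `‖x‖_{g_q} = sup_{n≥1} ((1/n)∑_{k=1}^n |x_k|^q)^{1/q}`. -/
noncomputable def gNorm (q : ℝ) (x : ℕ → ℝ) : ℝ≥0∞ :=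
  ⨆ n : ℕ, (((n : ℝ≥0∞) + 1)⁻¹ * ∑ k ∈ Finset.Icc 1 (n + 1), ENNReal.ofReal |x k| ^ q) ^ (1 / q)

section Helpers

/-- MVT for `t ^ c` on `[m, m+1]`. -/
lemma rpow_slope (c : ℝ) (m : ℕ) (hm : 1 ≤ m) :
    ∃ ξ : ℝ, (m : ℝ) < ξ ∧ ξ < (m : ℝ) + 1 ∧
      ((m : ℝ) + 1) ^ c - (m : ℝ) ^ c = c * ξ ^ (c - 1) := by
  have hm0 : (0:ℝ) < m := by exact_mod_cast hm
  have hlt : (m : ℝ) < (m : ℝ) + 1 := by linarith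
  have hcont : ContinuousOn (fun t : ℝ => t ^ c) (Set.Icc (m : ℝ) ((m : ℝ) + 1)) := by
    intro t ht
    exact (Real.continuousAt_rpow_const t c (Or.inl (by nlinarith [ht.1]))).continuousWithinAt
  have hderiv : ∀ t ∈ Set.Ioo (m : ℝ) ((m : ℝ) + 1),
      HasDerivAt (fun t : ℝ => t ^ c) (c * t ^ (c - 1)) t := by
    intro t ht
    exact Real.hasDerivAt_rpow_const (Or.inl (by nlinarith [ht.1]))
  obtain ⟨ξ, hξ, heq⟩ := exists_hasDerivAt_eq_slope (fun t : ℝ => t ^ c)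
    (fun t => c * t ^ (c - 1)) hlt hcont hderiv
  refine ⟨ξ, hξ.1, hξ.2, ?_⟩
  have : ((m:ℝ) + 1) - (m:ℝ) = 1 := by ring
  rw [this, div_one] at heq
  simpa using heq.symm

lemma slope_le_aux (β : ℝ) (hβ : 1 < β) (m : ℕ) (hm : 1 ≤ m) :
    (β - 1) * ((m : ℝ) + 1) ^ (-β) ≤ (m : ℝ) ^ (1 - β) - ((m : ℝ) + 1) ^ (1 - β) := by
  obtain ⟨ξ, h1, h2, heq⟩ := rpow_slope (1 - β) m hm
  have hm0 : (0:ℝ) < m := by exact_mod_cast hm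
  have hξ0 : 0 < ξ := lt_trans hm0 h1
  have hmon : ((m : ℝ) + 1) ^ (1 - β - 1) ≤ ξ ^ (1 - β - 1) :=
    Real.rpow_le_rpow_of_nonpos hξ0 h2.le (by linarith)
  have : (m : ℝ) ^ (1 - β) - ((m : ℝ) + 1) ^ (1 - β) = (β - 1) * ξ ^ (1 - β - 1) := by
    nlinarith [heq]
  rw [this]
  have h2' : (1 : ℝ) - β - 1 = -β - 0 := by ring
  have : ((m : ℝ) + 1) ^ (-β) ≤ ξ ^ (1 - β - 1) := by
    calc ((m : ℝ) + 1) ^ (-β) = ((m : ℝ) + 1) ^ (1 - β - 1) := by norm_num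
    _ ≤ ξ ^ (1 - β - 1) := hmon
  nlinarith [this]

lemma slope_ge_aux (s : ℝ) (hs0 : 0 < s) (hs1 : s < 1) (m : ℕ) (hm : 1 ≤ m) :
    (1 - s) * ((m : ℝ) + 1) ^ (-s) ≤ ((m : ℝ) + 1) ^ (1 - s) - (m : ℝ) ^ (1 - s) := by
  obtain ⟨ξ, h1, h2, heq⟩ := rpow_slope (1 - s) m hm
  have hm0 : (0:ℝ) < m := by exact_mod_cast hm
  have hξ0 : 0 < ξ := lt_trans hm0 h1
  have hmon : ((m : ℝ) + 1) ^ (1 - s - 1) ≤ ξ ^ (1 - s - 1) :=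
    Real.rpow_le_rpow_of_nonpos hξ0 h2.le (by linarith)
  have he : (1 : ℝ) - s - 1 = -s := by ring
  rw [he] at hmon heq
  rw [heq]
  nlinarith [hmon]

/-- `∑_{k=1}^m k^{-1/2} ≤ 2 √m`. -/
lemma sum_rpow_neg_half_le (m : ℕ) :
    ∑ k ∈ Icc 1 m, ((k : ℝ)) ^ (-(2⁻¹ : ℝ)) ≤ 2 * (m : ℝ) ^ ((2⁻¹ : ℝ)) := by
  induction m with
  | zero => simp
  | succ m ih =>
    rw [Finset.sum_Icc_succ_top (by omega : 1 ≤ m + 1)]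
    rcases Nat.eq_zero_or_pos m with rfl | hm
    · norm_num
    · have key := slope_ge_aux (2⁻¹) (by norm_num) (by norm_num) m hm
      have h1 : (1 : ℝ) - 2⁻¹ = 2⁻¹ := by norm_num
      rw [h1] at key
      push_cast
      push_cast at ih
      nlinarith [key]

/-- Tail bound for `∑ m^{-β}` over `Icc (k+1) (k+d)`. -/
lemma tail_block (β : ℝ) (hβ : 1 < β) (k : ℕ) (hk : 1 ≤ k) (d : ℕ) :
    (β - 1) * ∑ m ∈ Icc (k+1) (k+d), ((m : ℝ)) ^ (-β)
      ≤ (k : ℝ) ^ (1 - β) - ((k + d : ℕ) : ℝ) ^ (1 - β) := by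
  induction d with
  | zero => simp
  | succ d ih =>
    have hstep := slope_le_aux β hβ (k + d) (by omega)
    rw [show k + (d+1) = (k+d) + 1 by ring, Finset.sum_Icc_succ_top (by omega : k + 1 ≤ k + d + 1)]
    push_cast
    push_cast at ih hstep
    nlinarith

lemma tail_bound (β : ℝ) (hβ : 1 < β) (k : ℕ) (hk : 1 ≤ k) (T : Finset ℕ)
    (hT : ∀ m ∈ T, k ≤ m) :
    ∑ m ∈ T, ((m : ℝ)) ^ (-β) ≤ (1 + 1/(β - 1)) * (k : ℝ) ^ (1 - β) := by
  have hk0 : (0:ℝ) < k := by exact_mod_cast hk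
  obtain ⟨M, hM⟩ : ∃ M, ∀ m ∈ T, m ≤ M := ⟨T.sup id, fun m hm => Finset.le_sup (f := id) hm⟩
  have hsub : T ⊆ Icc k (k + (M - k)) := by
    intro m hm
    have := hT m hm; have := hM m hm
    simp only [Finset.mem_Icc]; omega
  have h1 : ∑ m ∈ T, ((m : ℝ)) ^ (-β) ≤ ∑ m ∈ Icc k (k + (M-k)), ((m : ℝ)) ^ (-β) :=
    Finset.sum_le_sum_of_subset_of_nonneg hsub
      (fun m _ _ => Real.rpow_nonneg (Nat.cast_nonneg m) _)
  have h2 : ∑ m ∈ Icc k (k + (M-k)), ((m : ℝ)) ^ (-β)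
      = (k:ℝ) ^ (-β) + ∑ m ∈ Icc (k+1) (k + (M-k)), ((m : ℝ)) ^ (-β) := by
    rw [Finset.Icc_eq_cons_Ioc (Nat.le_add_right k (M-k)), Finset.sum_cons, ← Finset.Icc_add_one_left_eq_Ioc]
  have h3 := tail_block β hβ k hk (M - k)
  have hβ' : (0:ℝ) < β - 1 := by linarith
  have hB0 : (0:ℝ) ≤ ((k + (M-k) : ℕ) : ℝ) ^ (1 - β) := Real.rpow_nonneg (Nat.cast_nonneg _) _
  have h4 : (k:ℝ) ^ (-β) ≤ (k:ℝ) ^ (1 - β) :=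
    Real.rpow_le_rpow_of_exponent_le (by exact_mod_cast hk) (by linarith)
  calc ∑ m ∈ T, ((m : ℝ)) ^ (-β) ≤ (k:ℝ) ^ (-β) + ∑ m ∈ Icc (k+1) (k + (M-k)), ((m : ℝ)) ^ (-β) := by
        rw [← h2]; exact h1
    _ ≤ (1 + 1/(β - 1)) * (k : ℝ) ^ (1 - β) := by
        have hS : ∑ m ∈ Icc (k+1) (k + (M-k)), ((m : ℝ)) ^ (-β) ≤ (k:ℝ) ^ (1-β) / (β - 1) := by
          rw [le_div_iff₀ hβ']
          nlinarith [h3, hB0]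
        have : (1 + 1/(β - 1)) * (k : ℝ) ^ (1 - β) = (k:ℝ)^(1-β) + (k:ℝ)^(1-β)/(β-1) := by
          field_simp
        rw [this]
        linarith [h4, hS]

/-- Abel-type: if partial sums of `a` are ≤ `j*B` and `w` is nonneg decreasing (from index 1),
then `∑ a_k w_k ≤ B ∑ w_k`. -/
lemma abel_bound (a w : ℕ → ℝ) (B : ℝ) (ha : ∀ k, 0 ≤ a k) (hw : ∀ k, 0 ≤ w k)
    (hmono : ∀ k, 1 ≤ k → w (k + 1) ≤ w k)
    (hT : ∀ j, (∑ k ∈ Icc 1 j, a k) ≤ j * B) (m : ℕ) :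
    ∑ k ∈ Icc 1 m, a k * w k ≤ B * ∑ k ∈ Icc 1 m, w k := by
  have key : ∀ m, ∑ k ∈ Icc 1 m, a k * w k + ((m : ℝ) * B - ∑ k ∈ Icc 1 m, a k) * w m
      ≤ B * ∑ k ∈ Icc 1 m, w k := by
    intro m
    induction m with
    | zero => simp
    | succ m ih =>
      rw [Finset.sum_Icc_succ_top (by omega : 1 ≤ m + 1),
          Finset.sum_Icc_succ_top (by omega : 1 ≤ m + 1),
          Finset.sum_Icc_succ_top (by omega : 1 ≤ m + 1)]
      rcases Nat.eq_zero_or_pos m with rfl | hm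
      · simp; nlinarith [hw 1]
      · have hww := hmono m hm
        have hTm : (∑ k ∈ Icc 1 m, a k) ≤ m * B := hT m
        have h0 : 0 ≤ ((m : ℝ) * B - ∑ k ∈ Icc 1 m, a k) := by linarith
        have hw1 : 0 ≤ w (m + 1) := hw (m + 1)
        push_cast
        nlinarith [ih, mul_le_mul_of_nonneg_left hww h0]
  have := key m
  have h0 : 0 ≤ ((m : ℝ) * B - ∑ k ∈ Icc 1 m, a k) * w m :=
    mul_nonneg (by linarith [hT m]) (hw m)
  linarith

lemma sum_Icc_one {M : Type*} [AddCommMonoid M] (f : ℕ → M) (n : ℕ) :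
    ∑ k ∈ Icc 1 n, f k = ∑ i ∈ range n, f (i + 1) := by
  rw [← Finset.Ico_add_one_right_eq_Icc, Finset.sum_Ico_eq_sum_range]
  simp [add_comm]

lemma abs_mul_abs_rpow (t q : ℝ) (hq : 1 < q) : |t| * |t| ^ (q - 1) = |t| ^ q := by
  rcases eq_or_lt_of_le (abs_nonneg t) with h | h
  · rw [← h, Real.zero_rpow (by linarith), Real.zero_rpow (by linarith), mul_zero]
  · rw [show q = 1 + (q - 1) by ring, Real.rpow_add h, Real.rpow_one]
    ring_nf

lemma one_lt_conj (p q : ℝ) (hp : 1 < p) (hpq : 1 / p + 1 / q = 1) : 1 < q := by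
  have hp0 : 0 < p := by linarith
  have h1p : 0 < 1/p := by positivity
  have h2 : 1/p < 1 := by rw [div_lt_one hp0]; exact hp
  have hq1 : 0 < 1/q := by linarith
  have hq0 : 0 < q := by
    rcases lt_trichotomy q 0 with h | h | h
    · exfalso; have : 1/q < 0 := by exact div_neg_of_pos_of_neg one_pos h
      linarith
    · exfalso; rw [h] at hq1; simp at hq1
    · exact h
  have hq2 : 1/q < 1 := by linarith
  rw [div_lt_one hq0] at hq2
  exact hq2

lemma conj_sum (p q : ℝ) (hp : 1 < p) (hpq : 1 / p + 1 / q = 1) : q + p = p * q := by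
  have hp0 : p ≠ 0 := by linarith
  have hq0 : q ≠ 0 := by have := one_lt_conj p q hp hpq; linarith
  field_simp at hpq
  linarith

lemma lower_bound (p q : ℝ) (hp : 1 < p) (hpq : 1 / p + 1 / q = 1) (z : ℕ → ℝ) :
    gNorm q z ≤ 2 * ⨆ (x : ℕ → ℝ) (_ : lpSeqNorm p x ≤ 1), cesNorm p (fun n => z n * x n) := by
  have hp0 : 0 < p := by linarith
  have hq : 1 < q := one_lt_conj p q hp hpq
  have hq0 : 0 < q := by linarith
  have hqp : (q - 1) * p = q := by have := conj_sum p q hp hpq; nlinarith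
  rw [gNorm]
  refine iSup_le fun n => ?_
  set SUP := ⨆ (x : ℕ → ℝ) (_ : lpSeqNorm p x ≤ 1), cesNorm p (fun n => z n * x n) with hSUP
  set S : ℝ := ∑ k ∈ Icc 1 (n + 1), |z k| ^ q with hS
  have hS0 : 0 ≤ S := Finset.sum_nonneg fun k _ => Real.rpow_nonneg (abs_nonneg _) _
  have hsum : ∑ k ∈ Finset.Icc 1 (n + 1), ENNReal.ofReal |z k| ^ q = ENNReal.ofReal S := by
    rw [hS, ENNReal.ofReal_sum_of_nonneg (fun k _ => Real.rpow_nonneg (abs_nonneg _) _)]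
    exact Finset.sum_congr rfl fun k _ => ENNReal.ofReal_rpow_of_nonneg (abs_nonneg _) hq0.le
  rw [hsum]
  rcases eq_or_lt_of_le hS0 with hS0' | hSpos
  · rw [← hS0', ENNReal.ofReal_zero, mul_zero, ENNReal.zero_rpow_of_pos (by positivity)]
    exact zero_le
  -- the witness sequence
  set x : ℕ → ℝ := fun k => if k ∈ Icc 1 (n + 1) then |z k| ^ (q - 1) / S ^ (1/p) else 0 with hx
  have hxnonneg : ∀ k, 0 ≤ x k := by
    intro k; rw [hx]; dsimp only
    split
    · positivity
    · exact le_rfl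
  have hxzero : ∀ k, k ∉ Icc 1 (n+1) → x k = 0 := by
    intro k hk; rw [hx]; simp [hk]
  -- lp norm of x is 1
  have hxlp : lpSeqNorm p x ≤ 1 := by
    rw [lpSeqNorm]
    have h1 : (∑' m : ℕ, ENNReal.ofReal |x (m + 1)| ^ p)
        = ∑ m ∈ range (n + 1), ENNReal.ofReal |x (m + 1)| ^ p := by
      refine tsum_eq_sum fun m hm => ?_
      have : x (m + 1) = 0 := by
        apply hxzero; simp only [Finset.mem_Icc]; simp at hm; omega
      rw [this, abs_zero, ENNReal.ofReal_zero, ENNReal.zero_rpow_of_pos hp0]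
    have h2 : ∀ m ∈ range (n+1), ENNReal.ofReal |x (m + 1)| ^ p
        = ENNReal.ofReal (|z (m+1)| ^ q / S) := by
      intro m hm
      have hmem : m + 1 ∈ Icc 1 (n+1) := by simp at hm; simp only [Finset.mem_Icc]; omega
      rw [hx]; simp only [hmem, if_pos]
      rw [abs_of_nonneg (by positivity), ENNReal.ofReal_rpow_of_nonneg (by positivity) hp0.le]
      congr 1
      rw [Real.div_rpow (Real.rpow_nonneg (abs_nonneg _) _) (Real.rpow_nonneg hS0 _),
        ← Real.rpow_mul (abs_nonneg _), ← Real.rpow_mul hS0, hqp,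
        one_div_mul_cancel (by linarith : p ≠ 0), Real.rpow_one]
    rw [h1, Finset.sum_congr rfl h2,
      ← ENNReal.ofReal_sum_of_nonneg (fun m _ => by positivity), ← Finset.sum_div,
      ← sum_Icc_one (fun k => |z k| ^ q) (n+1), ← hS, div_self (by linarith : S ≠ 0),
      ENNReal.ofReal_one, ENNReal.one_rpow]
  -- the inner sums are large
  set A := ENNReal.ofReal (S ^ (1/q)) with hA
  have hinner : ∀ m : ℕ, n ≤ m → A ≤ ∑ k ∈ Icc 1 (m+1), ENNReal.ofReal |z k * x k| := by
    intro m hm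
    have hsub : Icc 1 (n+1) ⊆ Icc 1 (m+1) := Finset.Icc_subset_Icc_right (by omega)
    have heq : ∀ k ∈ Icc 1 (n+1), |z k * x k| = |z k| ^ q / S ^ (1/p) := by
      intro k hk
      have hxk : x k = |z k| ^ (q - 1) / S ^ (1/p) := by rw [hx]; simp [hk]
      have hnn : (0:ℝ) ≤ |z k| ^ (q - 1) / S ^ (1/p) := by positivity
      rw [abs_mul, hxk, abs_of_nonneg hnn, ← mul_div_assoc, abs_mul_abs_rpow _ _ hq]
    have : ∑ k ∈ Icc 1 (n+1), ENNReal.ofReal |z k * x k| = A := by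
      rw [hA]
      rw [← ENNReal.ofReal_sum_of_nonneg (fun k _ => abs_nonneg _)]
      congr 1
      rw [Finset.sum_congr rfl heq, ← Finset.sum_div, ← hS]
      rw [show (1:ℝ)/q = 1 - 1/p by linarith, Real.rpow_sub hSpos, Real.rpow_one]
    rw [← this]
    exact Finset.sum_le_sum_of_subset hsub
  -- bound cesNorm from below
  set N : ℝ≥0∞ := (n : ℝ≥0∞) + 1 with hN
  have hN0 : N ≠ 0 := by simp [hN]
  have hNtop : N ≠ ⊤ := by simp [hN]
  set t₀ : ℝ≥0∞ := ((2 * N)⁻¹ * A) ^ p with ht₀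
  have hterm : ∀ m ∈ Icc n (2*n+1),
      t₀ ≤ (((m : ℝ≥0∞) + 1)⁻¹ * ∑ k ∈ Icc 1 (m+1), ENNReal.ofReal |z k * x k|) ^ p := by
    intro m hm
    simp only [Finset.mem_Icc] at hm
    refine ENNReal.rpow_le_rpow (mul_le_mul' ?_ (hinner m hm.1)) hp0.le
    rw [ENNReal.inv_le_inv]
    rw [hN]
    push_cast
    calc ((m:ℝ≥0∞)) + 1 ≤ ((2*n+1 : ℕ):ℝ≥0∞) + 1 := by
          gcongr
          exact_mod_cast Nat.cast_le.mpr hm.2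
      _ = 2 * ((n:ℝ≥0∞) + 1) := by push_cast; ring
  have hces : (N * t₀) ^ (1/p) ≤ cesNorm p (fun j => z j * x j) := by
    rw [cesNorm]
    refine ENNReal.rpow_le_rpow ?_ (by positivity)
    calc N * t₀ ≤ ((Icc n (2*n+1)).card : ℝ≥0∞) * t₀ := by
          gcongr
          rw [Nat.card_Icc]
          rw [hN]
          have : 2*n+1+1-n = n+2 := by omega
          rw [this]
          push_cast
          gcongr
          norm_num
      _ = (Icc n (2*n+1)).card • t₀ := by rw [nsmul_eq_mul]
      _ ≤ ∑ m ∈ Icc n (2*n+1),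
            (((m : ℝ≥0∞) + 1)⁻¹ * ∑ k ∈ Icc 1 (m+1), ENNReal.ofReal |z (k) * x (k)|) ^ p :=
          Finset.card_nsmul_le_sum _ _ _ hterm
      _ ≤ _ := ENNReal.sum_le_tsum _
  -- final computation
  have hcomp : (N⁻¹ * ENNReal.ofReal S) ^ (1/q) = 2 * (N * t₀) ^ (1/p) := by
    have hA' : (ENNReal.ofReal S) ^ (1/q) = A := by
      rw [hA, ENNReal.ofReal_rpow_of_pos hSpos]
    have hAtop : A ≠ ⊤ := by rw [hA]; exact ENNReal.ofReal_ne_top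
    rw [ENNReal.mul_rpow_of_nonneg _ _ (by positivity), hA']
    rw [ht₀, ENNReal.mul_rpow_of_nonneg _ _ hp0.le]
    rw [ENNReal.mul_rpow_of_nonneg _ _ (by positivity : (0:ℝ) ≤ 1/p),
      ENNReal.mul_rpow_of_nonneg _ _ (by positivity : (0:ℝ) ≤ 1/p),
      ← ENNReal.rpow_mul, ← ENNReal.rpow_mul,
      mul_one_div_cancel (by linarith : p ≠ 0), ENNReal.rpow_one, ENNReal.rpow_one]
    have h2N : (2*N)⁻¹ = 2⁻¹ * N⁻¹ := ENNReal.mul_inv (Or.inr hNtop) (Or.inr hN0)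
    rw [h2N]
    rw [show 2 * (N ^ ((1:ℝ)/p) * (2⁻¹ * N⁻¹ * A)) = (2 * 2⁻¹) * ((N ^ ((1:ℝ)/p) * N⁻¹) * A)
      from by ring]
    rw [ENNReal.mul_inv_cancel (by norm_num) (by norm_num), one_mul]
    rw [ENNReal.inv_rpow, ← ENNReal.rpow_neg]
    rw [← ENNReal.rpow_neg_one N, ← ENNReal.rpow_add _ _ hN0 hNtop]
    rw [show (1:ℝ)/p + (-1) = -(1/q) by linarith]
  rw [hcomp]
  gcongr
  calc (N * t₀) ^ (1/p) ≤ cesNorm p (fun j => z j * x j) := hces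
    _ ≤ SUP := le_iSup₂ (f := fun x (_ : lpSeqNorm p x ≤ 1) => cesNorm p fun j => z j * x j) x hxlp

lemma upper_bound (p q : ℝ) (hp : 1 < p) (hpq : 1 / p + 1 / q = 1) :
    ∃ C : ℝ, 0 < C ∧ ∀ z x : ℕ → ℝ, lpSeqNorm p x ≤ 1 →
      cesNorm p (fun n => z n * x n) ≤ ENNReal.ofReal C * gNorm q z := by
  have hp0 : 0 < p := by linarith
  have hq : 1 < q := one_lt_conj p q hp hpq
  have hq0 : 0 < q := by linarith
  have hqpsum : q + p = p * q := conj_sum p q hp hpq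
  have hpfact : p = (p - 1) * q := by nlinarith
  set γ : ℝ := (p - 1) / 2 with hγ
  set β : ℝ := (p + 1) / 2 with hβdef
  have hγ0 : 0 < γ := by rw [hγ]; linarith
  have hβ : 1 < β := by rw [hβdef]; linarith
  have hβγ : 1 - β = -γ := by rw [hβdef, hγ]; ring
  set e : ℝ := 1 / (2 * q) with he
  have he0 : 0 < e := by positivity
  have heq2 : e * q = 1 / 2 := by rw [he]; field_simp
  have hdiv : p / q = p - 1 := by
    field_simp
    linarith [hpfact]
  have hep : e * p = γ := by rw [he, hγ, ← hdiv]; ring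
  set D : ℝ := 1 + 1 / (β - 1) with hD
  have hD0 : 0 < D := by
    have : 0 < β - 1 := by linarith
    rw [hD]; positivity
  refine ⟨(2:ℝ) ^ (1/q) * D ^ (1/p), by positivity, fun z x hx => ?_⟩
  set G := gNorm q z with hG
  rcases eq_or_ne G ⊤ with hGtop | hGtop
  · rw [hGtop, ENNReal.mul_top (by simp [ENNReal.ofReal_eq_zero]; positivity)]
    exact le_top
  set Z : ℕ → ℝ≥0∞ := fun k => ENNReal.ofReal |z k| with hZ
  set X : ℕ → ℝ≥0∞ := fun k => ENNReal.ofReal |x k| with hX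
  -- Step 0 : lp bound
  have hX1 : ∑' j : ℕ, X (j + 1) ^ p ≤ 1 := by
    have h := ENNReal.rpow_le_rpow hx hp0.le
    rw [lpSeqNorm, ← ENNReal.rpow_mul, one_div,
      inv_mul_cancel₀ (by linarith : p ≠ 0), ENNReal.rpow_one, ENNReal.one_rpow] at h
    exact h
  -- Step 1 : partial sum bound from gNorm
  have hT : ∀ j : ℕ, 1 ≤ j → ∑ k ∈ Icc 1 j, Z k ^ q ≤ (j : ℝ≥0∞) * G ^ q := by
    intro j hj
    have hj1 : j - 1 + 1 = j := by omega
    have h1 : ((((j - 1 : ℕ) : ℝ≥0∞) + 1)⁻¹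
        * ∑ k ∈ Icc 1 ((j - 1) + 1), ENNReal.ofReal |z k| ^ q) ^ (1/q) ≤ G := by
      rw [hG, gNorm]
      exact le_iSup (fun n : ℕ => (((n : ℝ≥0∞) + 1)⁻¹
        * ∑ k ∈ Finset.Icc 1 (n + 1), ENNReal.ofReal |z k| ^ q) ^ (1 / q)) (j - 1)
    have h2 := ENNReal.rpow_le_rpow h1 hq0.le
    rw [← ENNReal.rpow_mul, one_div, inv_mul_cancel₀ (by linarith : q ≠ 0),
      ENNReal.rpow_one] at h2
    have hcast : ((j - 1 : ℕ) : ℝ≥0∞) + 1 = (j : ℝ≥0∞) := by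
      rw [show ((j:ℕ):ℝ≥0∞) = ((j-1+1 : ℕ):ℝ≥0∞) by rw [hj1]]
      push_cast; ring
    rw [hj1, hcast] at h2
    have hj0 : (j : ℝ≥0∞) ≠ 0 := Nat.cast_ne_zero.mpr (by omega)
    have h3 := mul_le_mul_right h2 (j : ℝ≥0∞)
    rwa [← mul_assoc, ENNReal.mul_inv_cancel hj0 (ENNReal.natCast_ne_top j), one_mul] at h3
  -- Step 2-3 : Abel summation
  have hGqtop : G ^ q ≠ ⊤ := by
    intro h
    rw [ENNReal.rpow_eq_top_iff] at h
    rcases h with ⟨_, h⟩ | ⟨h, _⟩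
    · linarith
    · exact hGtop h
  set g : ℝ := (G ^ q).toReal with hg
  have hg0 : 0 ≤ g := ENNReal.toReal_nonneg
  have hGq : G ^ q = ENNReal.ofReal g := (ENNReal.ofReal_toReal hGqtop).symm
  have hZofReal : ∀ (s : Finset ℕ), ∑ k ∈ s, Z k ^ q = ENNReal.ofReal (∑ k ∈ s, |z k| ^ q) := by
    intro s
    rw [ENNReal.ofReal_sum_of_nonneg (fun k _ => Real.rpow_nonneg (abs_nonneg _) _)]
    exact Finset.sum_congr rfl fun k _ => ENNReal.ofReal_rpow_of_nonneg (abs_nonneg _) hq0.le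
  have hTr : ∀ j : ℕ, ∑ k ∈ Icc 1 j, |z k| ^ q ≤ (j : ℝ) * g := by
    intro j
    rcases Nat.eq_zero_or_pos j with rfl | hj
    · simp
    · have := hT j hj
      rw [hZofReal, hGq, ← ENNReal.ofReal_natCast j,
        ← ENNReal.ofReal_mul (Nat.cast_nonneg j)] at this
      exact (ENNReal.ofReal_le_ofReal_iff (by positivity)).mp this
  have habel := abel_bound (fun k => |z k| ^ q) (fun k => (k : ℝ) ^ (-(2⁻¹ : ℝ))) g
    (fun k => Real.rpow_nonneg (abs_nonneg _) _)
    (fun k => Real.rpow_nonneg (Nat.cast_nonneg _) _)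
    (fun k hk => by
      have hk0 : (0:ℝ) < k := by exact_mod_cast hk
      have : ((k:ℝ)) ≤ ((k+1:ℕ):ℝ) := by push_cast; linarith
      exact Real.rpow_le_rpow_of_nonpos hk0 this (by norm_num))
    hTr
  have hk_rpow : ∀ (k : ℕ) (r : ℝ), 1 ≤ k →
      ((k:ℝ≥0∞)) ^ r = ENNReal.ofReal ((k:ℝ) ^ r) := by
    intro k r hk
    rw [← ENNReal.ofReal_natCast, ENNReal.ofReal_rpow_of_pos (by exact_mod_cast hk)]
  have hS1 : ∀ n : ℕ, (∑ k ∈ Icc 1 (n+1), Z k ^ q * (k:ℝ≥0∞) ^ (-(2⁻¹:ℝ)))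
      ≤ G ^ q * (2 * ((n+1:ℕ) : ℝ≥0∞) ^ (2⁻¹:ℝ)) := by
    intro n
    have e1 : ∑ k ∈ Icc 1 (n+1), Z k ^ q * (k:ℝ≥0∞) ^ (-(2⁻¹:ℝ))
        = ENNReal.ofReal (∑ k ∈ Icc 1 (n+1), |z k| ^ q * (k:ℝ) ^ (-(2⁻¹:ℝ))) := by
      rw [ENNReal.ofReal_sum_of_nonneg (fun k _ => by positivity)]
      refine Finset.sum_congr rfl fun k hk => ?_
      have hk1 : 1 ≤ k := (Finset.mem_Icc.mp hk).1
      rw [ENNReal.ofReal_mul (by positivity), hk_rpow k _ hk1,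
        ENNReal.ofReal_rpow_of_nonneg (abs_nonneg _) hq0.le]
    rw [e1, hGq]
    calc ENNReal.ofReal (∑ k ∈ Icc 1 (n+1), |z k| ^ q * (k:ℝ) ^ (-(2⁻¹:ℝ)))
        ≤ ENNReal.ofReal (g * ∑ k ∈ Icc 1 (n+1), (k:ℝ) ^ (-(2⁻¹:ℝ))) :=
          ENNReal.ofReal_le_ofReal (habel (n+1))
      _ ≤ ENNReal.ofReal (g * (2 * ((n+1:ℕ):ℝ) ^ (2⁻¹:ℝ))) :=
          ENNReal.ofReal_le_ofReal
            (mul_le_mul_of_nonneg_left (sum_rpow_neg_half_le (n+1)) hg0)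
      _ = ENNReal.ofReal g * (2 * ((n+1:ℕ):ℝ≥0∞) ^ (2⁻¹:ℝ)) := by
          rw [ENNReal.ofReal_mul hg0, ENNReal.ofReal_mul (by norm_num),
            hk_rpow (n+1) _ (by omega)]
          norm_num
  -- Step 4 : Hölder
  set S2 : ℕ → ℝ≥0∞ := fun n => ∑ k ∈ Icc 1 (n+1), X k ^ p * (k:ℝ≥0∞) ^ γ with hS2
  have conj : p.HolderConjugate q := ⟨by
    rw [inv_one, show p⁻¹ = 1/p by rw [one_div], show q⁻¹ = 1/q by rw [one_div]]; exact hpq, hp0, hq0⟩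
  have hHolder : ∀ n, (∑ k ∈ Icc 1 (n+1), Z k * X k)
      ≤ (S2 n) ^ (1/p) * (∑ k ∈ Icc 1 (n+1), Z k ^ q * (k:ℝ≥0∞) ^ (-(2⁻¹:ℝ))) ^ (1/q) := by
    intro n
    have key := ENNReal.inner_le_Lp_mul_Lq (Icc 1 (n+1))
        (fun k => X k * (k:ℝ≥0∞) ^ e) (fun k => Z k * (k:ℝ≥0∞) ^ (-e)) conj
    have lhs_eq : ∀ k ∈ Icc 1 (n+1),
        (X k * (k:ℝ≥0∞) ^ e) * (Z k * (k:ℝ≥0∞) ^ (-e)) = Z k * X k := by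
      intro k hk
      have hk1 : 1 ≤ k := (Finset.mem_Icc.mp hk).1
      have hk0 : (k:ℝ≥0∞) ≠ 0 := Nat.cast_ne_zero.mpr (by omega)
      have h1 : ((k:ℝ≥0∞)) ^ e * ((k:ℝ≥0∞)) ^ (-e) = 1 := by
        rw [← ENNReal.rpow_add _ _ hk0 (ENNReal.natCast_ne_top k), add_neg_cancel,
          ENNReal.rpow_zero]
      calc (X k * (k:ℝ≥0∞) ^ e) * (Z k * (k:ℝ≥0∞) ^ (-e))
          = (Z k * X k) * ((k:ℝ≥0∞) ^ e * (k:ℝ≥0∞) ^ (-e)) := by ring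
        _ = Z k * X k := by rw [h1, mul_one]
    have f_eq : ∀ k ∈ Icc 1 (n+1),
        (X k * (k:ℝ≥0∞) ^ e) ^ p = X k ^ p * (k:ℝ≥0∞) ^ γ := by
      intro k hk
      rw [ENNReal.mul_rpow_of_nonneg _ _ hp0.le, ← ENNReal.rpow_mul, hep]
    have g_eq : ∀ k ∈ Icc 1 (n+1),
        (Z k * (k:ℝ≥0∞) ^ (-e)) ^ q = Z k ^ q * (k:ℝ≥0∞) ^ (-(2⁻¹:ℝ)) := by
      intro k hk
      rw [ENNReal.mul_rpow_of_nonneg _ _ hq0.le, ← ENNReal.rpow_mul,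
        show (-e) * q = -(2⁻¹:ℝ) by rw [neg_mul, heq2]; norm_num]
    rw [Finset.sum_congr rfl lhs_eq, Finset.sum_congr rfl f_eq,
      Finset.sum_congr rfl g_eq] at key
    exact key
  -- Step 5-6 : pointwise bound on the Cesàro terms
  have hterm : ∀ n : ℕ, (((n:ℝ≥0∞) + 1)⁻¹
        * ∑ k ∈ Icc 1 (n+1), ENNReal.ofReal |z k * x k|) ^ p
      ≤ (G ^ p * (2:ℝ≥0∞) ^ ((1/q) * p)) * (((n:ℝ≥0∞) + 1) ^ (-β) * S2 n) := by
    intro n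
    set N : ℝ≥0∞ := (n:ℝ≥0∞) + 1 with hN
    have hN0 : N ≠ 0 := by simp [hN]
    have hNtop : N ≠ ⊤ := by simp [hN]
    have hNcast : ((n+1:ℕ):ℝ≥0∞) = N := by rw [hN]; push_cast; ring
    have habs : ∀ k ∈ Icc 1 (n+1), ENNReal.ofReal |z k * x k| = Z k * X k := by
      intro k _
      rw [abs_mul, ENNReal.ofReal_mul (abs_nonneg _)]
    rw [Finset.sum_congr rfl habs]
    have hS1' : (∑ k ∈ Icc 1 (n+1), Z k ^ q * (k:ℝ≥0∞) ^ (-(2⁻¹:ℝ))) ^ (1/q)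
        ≤ (G ^ q * (2 * N ^ (2⁻¹:ℝ))) ^ (1/q) := by
      rw [← hNcast]
      exact ENNReal.rpow_le_rpow (hS1 n) (by positivity)
    have hexp : (G ^ q * (2 * N ^ (2⁻¹:ℝ))) ^ (1/q)
        = G * ((2:ℝ≥0∞) ^ (1/q) * N ^ e) := by
      rw [ENNReal.mul_rpow_of_nonneg _ _ (by positivity : (0:ℝ) ≤ 1/q),
        ENNReal.mul_rpow_of_nonneg _ _ (by positivity : (0:ℝ) ≤ 1/q),
        ← ENNReal.rpow_mul, ← ENNReal.rpow_mul,
        mul_one_div_cancel (by linarith : q ≠ 0), ENNReal.rpow_one,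
        show (2⁻¹:ℝ) * (1/q) = e by rw [he]; ring]
    have hchain : N⁻¹ * (∑ k ∈ Icc 1 (n+1), Z k * X k)
        ≤ G * (2:ℝ≥0∞) ^ (1/q) * (N ^ (e - 1) * (S2 n) ^ (1/p)) := by
      have h1 : N⁻¹ * (∑ k ∈ Icc 1 (n+1), Z k * X k)
          ≤ N⁻¹ * ((S2 n) ^ (1/p) * (G * ((2:ℝ≥0∞) ^ (1/q) * N ^ e))) := by
        refine mul_le_mul_right ?_ _
        exact le_trans (hHolder n) (by rw [← hexp]; exact mul_le_mul_right hS1' _)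
      refine le_trans h1 (le_of_eq ?_)
      have hNe : N⁻¹ * N ^ e = N ^ (e - 1) := by
        rw [← ENNReal.rpow_neg_one N, ← ENNReal.rpow_add _ _ hN0 hNtop]
        congr 1; ring
      rw [← hNe]; ring
    calc (N⁻¹ * ∑ k ∈ Icc 1 (n+1), Z k * X k) ^ p
        ≤ (G * (2:ℝ≥0∞) ^ (1/q) * (N ^ (e - 1) * (S2 n) ^ (1/p))) ^ p :=
          ENNReal.rpow_le_rpow hchain hp0.le
      _ = (G ^ p * (2:ℝ≥0∞) ^ ((1/q) * p)) * (N ^ (-β) * S2 n) := by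
          rw [ENNReal.mul_rpow_of_nonneg _ _ hp0.le,
            ENNReal.mul_rpow_of_nonneg _ _ hp0.le,
            ENNReal.mul_rpow_of_nonneg _ _ hp0.le,
            ← ENNReal.rpow_mul, ← ENNReal.rpow_mul, ← ENNReal.rpow_mul,
            show (e - 1) * p = -β by rw [hβdef]; linear_combination hep,
            one_div_mul_cancel (by linarith : p ≠ 0), ENNReal.rpow_one]
  -- Step 7 : tail estimate for the double sum
  have hR' : ∀ j : ℕ, (∑' n : ℕ, if j ≤ n then ((n:ℝ≥0∞) + 1) ^ (-β) else 0)
      ≤ ENNReal.ofReal D * ((j:ℝ≥0∞) + 1) ^ (-γ) := by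
    intro j
    rw [ENNReal.tsum_eq_iSup_sum]
    refine iSup_le fun s => ?_
    rw [← Finset.sum_filter]
    set F := s.filter (fun n => j ≤ n) with hF
    set T := F.image (· + 1) with hTdef
    have hsum_eq : ∑ n ∈ F, ((n:ℝ≥0∞) + 1) ^ (-β)
        = ENNReal.ofReal (∑ m ∈ T, ((m:ℝ)) ^ (-β)) := by
      rw [hTdef, Finset.sum_image (fun a _ b _ h => by omega)]
      rw [ENNReal.ofReal_sum_of_nonneg (fun n _ => Real.rpow_nonneg (Nat.cast_nonneg _) _)]
      refine Finset.sum_congr rfl fun n _ => ?_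
      rw [show ((n:ℝ≥0∞) + 1) = ((n+1:ℕ):ℝ≥0∞) by push_cast; ring, hk_rpow (n+1) _ (by omega)]
    rw [hsum_eq]
    have htail := tail_bound β hβ (j+1) (by omega) T (by
      intro m hm
      rw [hTdef] at hm
      obtain ⟨n, hn, rfl⟩ := Finset.mem_image.mp hm
      rw [hF] at hn
      have := (Finset.mem_filter.mp hn).2
      omega)
    calc ENNReal.ofReal (∑ m ∈ T, ((m:ℝ)) ^ (-β))
        ≤ ENNReal.ofReal ((1 + 1/(β - 1)) * ((j+1:ℕ):ℝ) ^ (1 - β)) :=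
          ENNReal.ofReal_le_ofReal htail
      _ = ENNReal.ofReal D * ((j:ℝ≥0∞) + 1) ^ (-γ) := by
          rw [ENNReal.ofReal_mul (by rw [← hD]; positivity), ← hD, hβγ,
            show ((j:ℝ≥0∞) + 1) = ((j+1:ℕ):ℝ≥0∞) by push_cast; ring,
            hk_rpow (j+1) _ (by omega)]
  -- Step 8 : the double sum
  have hdouble : ∑' n : ℕ, ((n:ℝ≥0∞) + 1) ^ (-β) * S2 n ≤ ENNReal.ofReal D := by
    have hS2t : ∀ n : ℕ, S2 n
        = ∑' j : ℕ, (if j ≤ n then X (j+1) ^ p * ((j:ℝ≥0∞) + 1) ^ γ else 0) := by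
      intro n
      show (∑ k ∈ Icc 1 (n+1), X k ^ p * (k:ℝ≥0∞) ^ γ) = _
      rw [sum_Icc_one (fun k => X k ^ p * (k:ℝ≥0∞) ^ γ) (n+1)]
      rw [eq_comm]
      rw [tsum_eq_sum (s := range (n+1)) (fun j hj => by
        rw [if_neg]; simp at hj; omega)]
      refine Finset.sum_congr rfl fun i hi => ?_
      rw [if_pos (by simp at hi; omega)]
      congr 2
      push_cast; ring
    calc ∑' n : ℕ, ((n:ℝ≥0∞) + 1) ^ (-β) * S2 n
        = ∑' (n : ℕ) (j : ℕ), (if j ≤ n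
            then ((n:ℝ≥0∞) + 1) ^ (-β) * (X (j+1) ^ p * ((j:ℝ≥0∞) + 1) ^ γ) else 0) := by
          congr 1; funext n
          rw [hS2t n, ← ENNReal.tsum_mul_left]
          congr 1; funext j
          rw [mul_ite, mul_zero]
      _ = ∑' (j : ℕ) (n : ℕ), (if j ≤ n
            then ((n:ℝ≥0∞) + 1) ^ (-β) * (X (j+1) ^ p * ((j:ℝ≥0∞) + 1) ^ γ) else 0) :=
          ENNReal.tsum_comm
      _ = ∑' j : ℕ, (X (j+1) ^ p * ((j:ℝ≥0∞) + 1) ^ γ)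
            * ∑' n : ℕ, (if j ≤ n then ((n:ℝ≥0∞) + 1) ^ (-β) else 0) := by
          congr 1; funext j
          rw [← ENNReal.tsum_mul_left]
          congr 1; funext n
          rw [mul_ite, mul_zero, mul_comm]
      _ ≤ ∑' j : ℕ, (X (j+1) ^ p * ((j:ℝ≥0∞) + 1) ^ γ)
            * (ENNReal.ofReal D * ((j:ℝ≥0∞) + 1) ^ (-γ)) :=
          ENNReal.tsum_le_tsum (fun j => mul_le_mul_right (hR' j) _)
      _ = ∑' j : ℕ, ENNReal.ofReal D * X (j+1) ^ p := by
          congr 1; funext j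
          have hj0 : ((j:ℝ≥0∞) + 1) ≠ 0 := by simp
          have hjtop : ((j:ℝ≥0∞) + 1) ≠ ⊤ := by simp
          have h1 : ((j:ℝ≥0∞) + 1) ^ γ * ((j:ℝ≥0∞) + 1) ^ (-γ) = 1 := by
            rw [← ENNReal.rpow_add _ _ hj0 hjtop, add_neg_cancel, ENNReal.rpow_zero]
          calc X (j+1) ^ p * ((j:ℝ≥0∞) + 1) ^ γ * (ENNReal.ofReal D * ((j:ℝ≥0∞) + 1) ^ (-γ))
              = ENNReal.ofReal D * X (j+1) ^ p
                  * (((j:ℝ≥0∞) + 1) ^ γ * ((j:ℝ≥0∞) + 1) ^ (-γ)) := by ring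
            _ = ENNReal.ofReal D * X (j+1) ^ p := by rw [h1, mul_one]
      _ = ENNReal.ofReal D * ∑' j : ℕ, X (j+1) ^ p := ENNReal.tsum_mul_left
      _ ≤ ENNReal.ofReal D * 1 := mul_le_mul_right hX1 _
      _ = ENNReal.ofReal D := mul_one _
  -- Step 9 : conclude
  have hces : cesNorm p (fun n => z n * x n)
      ≤ ((G ^ p * (2:ℝ≥0∞) ^ ((1/q) * p)) * ENNReal.ofReal D) ^ (1/p) := by
    rw [cesNorm]
    refine ENNReal.rpow_le_rpow ?_ (by positivity)
    calc ∑' n : ℕ, (((n:ℝ≥0∞) + 1)⁻¹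
          * ∑ k ∈ Finset.Icc 1 (n+1), ENNReal.ofReal |z k * x k|) ^ p
        ≤ ∑' n : ℕ, (G ^ p * (2:ℝ≥0∞) ^ ((1/q) * p)) * (((n:ℝ≥0∞) + 1) ^ (-β) * S2 n) :=
          ENNReal.tsum_le_tsum hterm
      _ = (G ^ p * (2:ℝ≥0∞) ^ ((1/q) * p)) * ∑' n : ℕ, ((n:ℝ≥0∞) + 1) ^ (-β) * S2 n :=
          ENNReal.tsum_mul_left
      _ ≤ (G ^ p * (2:ℝ≥0∞) ^ ((1/q) * p)) * ENNReal.ofReal D := mul_le_mul_right hdouble _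
  refine le_trans hces (le_of_eq ?_)
  rw [ENNReal.mul_rpow_of_nonneg _ _ (by positivity : (0:ℝ) ≤ 1/p),
    ENNReal.mul_rpow_of_nonneg _ _ (by positivity : (0:ℝ) ≤ 1/p),
    ← ENNReal.rpow_mul, ← ENNReal.rpow_mul,
    mul_one_div_cancel (by linarith : p ≠ 0), ENNReal.rpow_one,
    show (1/q) * p * (1/p) = 1/q by field_simp,
    show (2:ℝ≥0∞) = ENNReal.ofReal 2 by rw [ENNReal.ofReal_ofNat],
    ENNReal.ofReal_rpow_of_pos (by norm_num : (0:ℝ) < 2),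
    ENNReal.ofReal_rpow_of_nonneg hD0.le (by positivity : (0:ℝ) ≤ 1/p),
    mul_assoc, ← ENNReal.ofReal_mul (by positivity), mul_comm]

end Helpers

/-- Identification of the multiplier space `M(ℓ_p, ces_p)` with Bennett's space `g_q`. -/
theorem stmt_8 (p q : ℝ) (hp : 1 < p) (hpq : 1 / p + 1 / q = 1) :
    ∃ c C : ℝ, 0 < c ∧ 0 < C ∧ ∀ z : ℕ → ℝ,
      ENNReal.ofReal c * gNorm q z ≤
          (⨆ (x : ℕ → ℝ) (_ : lpSeqNorm p x ≤ 1), cesNorm p (fun n => z n * x n)) ∧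
        (⨆ (x : ℕ → ℝ) (_ : lpSeqNorm p x ≤ 1), cesNorm p (fun n => z n * x n)) ≤
          ENNReal.ofReal C * gNorm q z := by
  obtain ⟨C, hC, hCall⟩ := upper_bound p q hp hpq
  refine ⟨1/2, C, by norm_num, hC, fun z => ?_⟩
  constructor
  · have hlow := lower_bound p q hp hpq z
    have hhalf : ENNReal.ofReal (1/2) * 2 = 1 := by
      rw [show (1:ℝ)/2 = 2⁻¹ by norm_num, ENNReal.ofReal_inv_of_pos (by norm_num),
        ENNReal.ofReal_ofNat, ENNReal.inv_mul_cancel (by norm_num) (by norm_num)]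
    calc ENNReal.ofReal (1/2) * gNorm q z
        ≤ ENNReal.ofReal (1/2)
          * (2 * ⨆ (x : ℕ → ℝ) (_ : lpSeqNorm p x ≤ 1), cesNorm p (fun n => z n * x n)) :=
          mul_le_mul_right hlow _
      _ = _ := by rw [← mul_assoc, hhalf, one_mul]
  · exact iSup_le fun x => iSup_le fun hx => hCall z x hx
end

section
/- Let 1 < p < ∞ and let q satisfy 1/p + 1/q = 1. There exist constants c, C > 0, depending only on p, such that for every Lebesgue-measurable g : (0,∞) → ℝ: c · ‖g‖_{G_q} ≤ sup{ ‖g·f‖_{Ces_p} : f Lebesgue-measurable with ‖f‖_{L_p} ≤ 1 } ≤ C · ‖g‖_{G_q}, where g·f denotes the pointwise product and all quantities take values in [0,∞]. -/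
open ENNReal MeasureTheory

/-- The `L_p(0,∞)` norm `‖f‖_{L_p} = (∫_0^∞ |f(t)|^p dt)^{1/p}`. -/
noncomputable def LpNorm (p : ℝ) (f : ℝ → ℝ) : ℝ≥0∞ :=
  (∫⁻ t in Set.Ioi (0 : ℝ), ENNReal.ofReal |f t| ^ p) ^ (1 / p)

/-- The Cesàro norm `‖f‖_{Ces_p} = (∫_0^∞ ((1/x)∫_0^x |f(t)| dt)^p dx)^{1/p}`. -/
noncomputable def CesNorm (p : ℝ) (f : ℝ → ℝ) : ℝ≥0∞ :=
  (∫⁻ x in Set.Ioi (0 : ℝ),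
      ((ENNReal.ofReal x)⁻¹ * ∫⁻ t in Set.Ioc (0 : ℝ) x, ENNReal.ofReal |f t|) ^ p) ^ (1 / p)

/-- The norm `‖f‖_{G_q} = sup_{x>0} ((1/x)∫_0^x |f(t)|^q dt)^{1/q}`. -/
noncomputable def GNorm (q : ℝ) (f : ℝ → ℝ) : ℝ≥0∞ :=
  ⨆ (x : ℝ) (_ : 0 < x),
    ((ENNReal.ofReal x)⁻¹ * ∫⁻ t in Set.Ioc (0 : ℝ) x, ENNReal.ofReal |f t| ^ q) ^ (1 / q)

section AuxLemmas
open Set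

lemma lintIoc {r : ℝ} (hr : -1 < r) {x : ℝ} (hx : 0 < x) :
    ∫⁻ s in Set.Ioc 0 x, ENNReal.ofReal (s ^ r) = ENNReal.ofReal (x ^ (r + 1) / (r + 1)) := by
  have hint : IntegrableOn (fun s : ℝ => s ^ r) (Set.Ioc 0 x) := by
    have := (intervalIntegral.intervalIntegrable_rpow' (a := 0) (b := x) hr)
    exact (intervalIntegrable_iff_integrableOn_Ioc_of_le hx.le).mp this
  rw [← ofReal_integral_eq_lintegral_ofReal hint]
  · congr 1
    have : ∫ s in Set.Ioc 0 x, s ^ r = ∫ s in (0:ℝ)..x, s ^ r := by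
      rw [intervalIntegral.integral_of_le hx.le]
    rw [this, integral_rpow (Or.inl hr), Real.zero_rpow (by linarith), sub_zero]
  · exact (ae_restrict_mem measurableSet_Ioc).mono fun s hs => Real.rpow_nonneg hs.1.le _

lemma lintIoi {r : ℝ} (hr : r < -1) {t : ℝ} (ht : 0 < t) :
    ∫⁻ s in Set.Ioi t, ENNReal.ofReal (s ^ r) = ENNReal.ofReal (-t ^ (r + 1) / (r + 1)) := by
  rw [← ofReal_integral_eq_lintegral_ofReal (integrableOn_Ioi_rpow_of_lt hr ht)]
  · rw [integral_Ioi_rpow_of_lt hr ht]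
  · exact (ae_restrict_mem measurableSet_Ioi).mono fun s hs =>
      Real.rpow_nonneg (ht.trans hs).le _

lemma swap_lemma (ψ φ : ℝ → ℝ≥0∞) (hψ : Measurable ψ) (hφ : Measurable φ) :
    (∫⁻ t in Set.Ioi (0:ℝ), ψ t * ∫⁻ s in Set.Ioi t, φ s) =
      ∫⁻ s in Set.Ioi (0:ℝ), φ s * ∫⁻ t in Set.Ioc 0 s, ψ t := by
  have hF : Measurable (Function.uncurry fun t s : ℝ => if t < s then ψ t * φ s else 0) := by
    apply Measurable.ite
    · exact measurableSet_lt measurable_fst measurable_snd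
    · exact (hψ.comp measurable_fst).mul (hφ.comp measurable_snd)
    · exact measurable_const
  have key := lintegral_lintegral_swap (μ := volume.restrict (Set.Ioi (0:ℝ)))
    (ν := volume.restrict (Set.Ioi (0:ℝ))) hF.aemeasurable
  calc (∫⁻ t in Set.Ioi (0:ℝ), ψ t * ∫⁻ s in Set.Ioi t, φ s)
      = ∫⁻ t in Set.Ioi (0:ℝ), ∫⁻ s in Set.Ioi (0:ℝ), (if t < s then ψ t * φ s else 0) := by
        refine setLIntegral_congr_fun measurableSet_Ioi (fun t ht => ?_)
        have : (fun s => if t < s then ψ t * φ s else 0)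
            = Set.indicator (Set.Ioi t) (fun s => ψ t * φ s) := by
          ext s; by_cases h : t < s <;> simp [Set.indicator, h]
        rw [this, lintegral_indicator measurableSet_Ioi, Measure.restrict_restrict measurableSet_Ioi,
          Set.inter_eq_left.mpr (Set.Ioi_subset_Ioi ht.le),
          lintegral_const_mul _ hφ]
    _ = ∫⁻ s in Set.Ioi (0:ℝ), ∫⁻ t in Set.Ioi (0:ℝ), (if t < s then ψ t * φ s else 0) := key
    _ = ∫⁻ s in Set.Ioi (0:ℝ), φ s * ∫⁻ t in Set.Ioc 0 s, ψ t := by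
        refine setLIntegral_congr_fun measurableSet_Ioi (fun s hs => ?_)
        have : (fun t => if t < s then ψ t * φ s else 0)
            = Set.indicator (Set.Iio s) (fun t => ψ t * φ s) := by
          ext t; by_cases h : t < s <;> simp [Set.indicator, h]
        rw [this, lintegral_indicator measurableSet_Iio, Measure.restrict_restrict measurableSet_Iio]
        have h2 : Set.Iio s ∩ Set.Ioi (0:ℝ) = Set.Ioo 0 s := by
          ext t; simp [Set.mem_Ioo, and_comm]
        rw [h2, restrict_Ioo_eq_restrict_Ioc, lintegral_mul_const _ hψ, mul_comm]


lemma lemK (g : ℝ → ℝ) {q : ℝ} (hq0 : 0 < q) {y : ℝ} (hy : 0 < y) :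
    ∫⁻ t in Set.Ioc (0:ℝ) y, ENNReal.ofReal |g t| ^ q ≤ ENNReal.ofReal y * (GNorm q g) ^ q := by
  set I := ∫⁻ t in Set.Ioc (0:ℝ) y, ENNReal.ofReal |g t| ^ q with hI
  have h1 : ((ENNReal.ofReal y)⁻¹ * I) ^ (1 / q) ≤ GNorm q g := by
    refine le_iSup_of_le y ?_
    exact le_iSup (fun _ : 0 < y => ((ENNReal.ofReal y)⁻¹ * I) ^ (1 / q)) hy
  have h2 : (ENNReal.ofReal y)⁻¹ * I ≤ (GNorm q g) ^ q := by
    have := ENNReal.rpow_le_rpow h1 hq0.le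
    rwa [← ENNReal.rpow_mul, one_div, inv_mul_cancel₀ hq0.ne', ENNReal.rpow_one] at this
  calc I = ENNReal.ofReal y * ((ENNReal.ofReal y)⁻¹ * I) := by
        rw [← mul_assoc, ENNReal.mul_inv_cancel (by simpa using hy) ENNReal.ofReal_ne_top, one_mul]
    _ ≤ ENNReal.ofReal y * (GNorm q g) ^ q := mul_le_mul_right h2 _

lemma lemA (g : ℝ → ℝ) (hg : Measurable g) {q : ℝ} (hq0 : 0 < q) {x : ℝ} (hx : 0 < x) :
    ∫⁻ t in Set.Ioc (0:ℝ) x, ENNReal.ofReal |g t| ^ q * ENNReal.ofReal (t ^ (-(1/2) : ℝ)) ≤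
      2 * (GNorm q g) ^ q * ENNReal.ofReal (x ^ ((1:ℝ)/2)) := by
  set Gq := (GNorm q g) ^ q with hGq
  set gq : ℝ → ℝ≥0∞ := fun t => ENNReal.ofReal |g t| ^ q with hgq
  have hgqm : Measurable gq := (ENNReal.measurable_ofReal.comp hg.abs).pow measurable_const
  set ψ : ℝ → ℝ≥0∞ := (Set.Ioc (0:ℝ) x).indicator gq with hψ
  have hψm : Measurable ψ := hgqm.indicator measurableSet_Ioc
  set φ : ℝ → ℝ≥0∞ := fun s => ENNReal.ofReal (s ^ (-(3/2) : ℝ)) with hφ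
  have hφm : Measurable φ := ENNReal.measurable_ofReal.comp (measurable_id.pow measurable_const)
  -- step 1 : LHS of swap equals 2 * W
  have step1 : (∫⁻ t in Set.Ioi (0:ℝ), ψ t * ∫⁻ s in Set.Ioi t, φ s) =
      2 * ∫⁻ t in Set.Ioc (0:ℝ) x, gq t * ENNReal.ofReal (t ^ (-(1/2) : ℝ)) := by
    have e1 : (∫⁻ t in Set.Ioi (0:ℝ), ψ t * ∫⁻ s in Set.Ioi t, φ s) =
        ∫⁻ t in Set.Ioi (0:ℝ), 2 * ((Set.Ioc (0:ℝ) x).indicator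
          (fun t => gq t * ENNReal.ofReal (t ^ (-(1/2) : ℝ)))) t := by
      refine setLIntegral_congr_fun measurableSet_Ioi (fun t ht => ?_)
      have hIoi : ∫⁻ s in Set.Ioi t, φ s = ENNReal.ofReal 2 * ENNReal.ofReal (t ^ (-(1/2) : ℝ)) := by
        rw [hφ, lintIoi (by norm_num) ht, ← ENNReal.ofReal_mul (by norm_num)]
        congr 1
        rw [show (-(3/2) : ℝ) + 1 = -(1/2) by norm_num]
        ring
      rw [hIoi]
      by_cases h : t ∈ Set.Ioc (0:ℝ) x
      · simp only [hψ, Set.indicator_of_mem h]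
        rw [ENNReal.ofReal_ofNat]
        ring
      · simp [hψ, Set.indicator_of_notMem h]
    rw [e1, lintegral_const_mul' _ _ (by norm_num : (2:ℝ≥0∞) ≠ ⊤)]
    congr 1
    rw [lintegral_indicator measurableSet_Ioc, Measure.restrict_restrict measurableSet_Ioc,
      Set.inter_eq_left.mpr (fun t ht => ht.1)]
  -- step 2 : bound on the RHS of swap
  have step2 : (∫⁻ s in Set.Ioi (0:ℝ), φ s * ∫⁻ t in Set.Ioc 0 s, ψ t) ≤
      Gq * ENNReal.ofReal (4 * x ^ ((1:ℝ)/2)) := by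
    have hb : ∀ s ∈ Set.Ioi (0:ℝ), φ s * (∫⁻ t in Set.Ioc 0 s, ψ t) ≤
        Gq * ENNReal.ofReal (s ^ (-(3/2) : ℝ) * min x s) := by
      intro s hs
      have hinner : (∫⁻ t in Set.Ioc 0 s, ψ t) = ∫⁻ t in Set.Ioc (0:ℝ) (min x s), gq t := by
        rw [hψ, lintegral_indicator measurableSet_Ioc,
          Measure.restrict_restrict measurableSet_Ioc, Set.Ioc_inter_Ioc, max_self]
      have hk : (∫⁻ t in Set.Ioc 0 s, ψ t) ≤ ENNReal.ofReal (min x s) * Gq := by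
        rw [hinner]; exact lemK g hq0 (lt_min hx hs)
      calc φ s * (∫⁻ t in Set.Ioc 0 s, ψ t) ≤ φ s * (ENNReal.ofReal (min x s) * Gq) :=
            mul_le_mul_right hk _
        _ = Gq * ENNReal.ofReal (s ^ (-(3/2) : ℝ) * min x s) := by
            rw [hφ, ENNReal.ofReal_mul (Real.rpow_nonneg (le_of_lt hs) _)]
            ring
    calc (∫⁻ s in Set.Ioi (0:ℝ), φ s * ∫⁻ t in Set.Ioc 0 s, ψ t)
        ≤ ∫⁻ s in Set.Ioi (0:ℝ), Gq * ENNReal.ofReal (s ^ (-(3/2) : ℝ) * min x s) :=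
          setLIntegral_mono' measurableSet_Ioi hb
      _ = Gq * ∫⁻ s in Set.Ioi (0:ℝ), ENNReal.ofReal (s ^ (-(3/2) : ℝ) * min x s) := by
          rw [lintegral_const_mul]
          exact ENNReal.measurable_ofReal.comp
            ((measurable_id.pow measurable_const).mul (measurable_const.min measurable_id))
      _ ≤ Gq * ENNReal.ofReal (4 * x ^ ((1:ℝ)/2)) := by
          refine mul_le_mul_right (le_of_eq ?_) _
          rw [← Set.Ioc_union_Ioi_eq_Ioi hx.le,
            lintegral_union measurableSet_Ioi (Set.Ioc_disjoint_Ioi le_rfl)]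
          have e2 : ∫⁻ s in Set.Ioc (0:ℝ) x, ENNReal.ofReal (s ^ (-(3/2) : ℝ) * min x s)
              = ENNReal.ofReal (2 * x ^ ((1:ℝ)/2)) := by
            have : ∀ s ∈ Set.Ioc (0:ℝ) x, ENNReal.ofReal (s ^ (-(3/2) : ℝ) * min x s)
                = ENNReal.ofReal (s ^ (-(1/2) : ℝ)) := by
              intro s hs
              rw [min_eq_right hs.2]
              congr 1
              nth_rewrite 2 [show s = s ^ (1:ℝ) by rw [Real.rpow_one]]
              rw [← Real.rpow_add hs.1]
              norm_num
            rw [setLIntegral_congr_fun measurableSet_Ioc this,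
              lintIoc (by norm_num) hx]
            congr 1
            rw [show (-(1/2) : ℝ) + 1 = 1/2 by norm_num]
            ring
          have e3 : ∫⁻ s in Set.Ioi x, ENNReal.ofReal (s ^ (-(3/2) : ℝ) * min x s)
              = ENNReal.ofReal (2 * x ^ ((1:ℝ)/2)) := by
            have : ∀ s ∈ Set.Ioi x, ENNReal.ofReal (s ^ (-(3/2) : ℝ) * min x s)
                = ENNReal.ofReal (s ^ (-(3/2) : ℝ)) * ENNReal.ofReal x := by
              intro s hs
              rw [min_eq_left (le_of_lt hs), ENNReal.ofReal_mul (Real.rpow_nonneg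
                (le_of_lt (hx.trans hs)) _)]
            rw [setLIntegral_congr_fun measurableSet_Ioi this,
              lintegral_mul_const' _ _ ENNReal.ofReal_ne_top, lintIoi (by norm_num) hx]
            rw [show (-x ^ ((-(3/2):ℝ) + 1) / ((-(3/2):ℝ) + 1) : ℝ) = 2 * x ^ (-(1/2):ℝ) by
              rw [show ((-(3/2):ℝ) + 1) = -(1/2) by norm_num]; ring]
            rw [← ENNReal.ofReal_mul (by positivity)]
            congr 1
            rw [mul_assoc, ← Real.rpow_add_one hx.ne']
            norm_num
          rw [e2, e3, ← ENNReal.ofReal_add (by positivity) (by positivity)]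
          congr 1
          ring
  -- combine
  have hswap := swap_lemma ψ φ hψm hφm
  rw [step1] at hswap
  have : 2 * ∫⁻ t in Set.Ioc (0:ℝ) x, gq t * ENNReal.ofReal (t ^ (-(1/2) : ℝ)) ≤
      Gq * ENNReal.ofReal (4 * x ^ ((1:ℝ)/2)) := hswap ▸ step2
  have h4 : Gq * ENNReal.ofReal (4 * x ^ ((1:ℝ)/2)) =
      2 * (2 * Gq * ENNReal.ofReal (x ^ ((1:ℝ)/2))) := by
    rw [ENNReal.ofReal_mul (by norm_num), ENNReal.ofReal_ofNat]
    ring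
  rw [h4] at this
  exact (ENNReal.mul_le_mul_iff_right (by norm_num) (by norm_num)).mp this




lemma helper (a G P : ℝ≥0∞) (ha0 : a ≠ 0) (hat : a ≠ ⊤) {p q β : ℝ} (hp0 : 0 < p) (hq0 : 0 < q)
    (hβeq : (-1) * p + (1:ℝ)/2 * ((1/q) * p) = β) :
    (a⁻¹ * ((2 * G * a ^ ((1:ℝ)/2)) ^ ((1:ℝ)/q) * P ^ ((1:ℝ)/p))) ^ p =
      (2 * G) ^ ((1:ℝ)/q * p) * (a ^ β * P) := by
  rw [← ENNReal.rpow_neg_one a]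
  rw [ENNReal.mul_rpow_of_nonneg _ _ hp0.le, ENNReal.mul_rpow_of_nonneg _ _ hp0.le]
  rw [← ENNReal.rpow_mul, ← ENNReal.rpow_mul, ← ENNReal.rpow_mul]
  rw [ENNReal.mul_rpow_of_nonneg _ _ (by positivity : (0:ℝ) ≤ 1/q * p)]
  rw [← ENNReal.rpow_mul]
  rw [one_div p, inv_mul_cancel₀ hp0.ne', ENNReal.rpow_one]
  rw [show ((1:ℝ)/2) * ((1/q) * p) = (1/2 * (1/q*p)) by ring]
  rw [mul_comm (a ^ ((-1:ℝ)*p)) _, mul_assoc, mul_assoc, mul_comm P _,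
    ← mul_assoc (a ^ ((1:ℝ)/2 * (1/q*p))), ← ENNReal.rpow_add _ _ ha0 hat]
  rw [show (1/2 * (1/q*p) + (-1)*p : ℝ) = β by linarith]


lemma lemUpper (p q : ℝ) (hp : 1 < p) (hq : 1 < q) (hpq : 1 / p + 1 / q = 1)
    (g f : ℝ → ℝ) (hg : Measurable g) (hf : Measurable f) (hf1 : LpNorm p f ≤ 1) :
    CesNorm p (fun t => g t * f t) ≤
      (2 : ℝ≥0∞) ^ ((1:ℝ)/q) * (ENNReal.ofReal (2 / (p - 1))) ^ ((1:ℝ)/p) * GNorm q g := by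
  have hp0 : 0 < p := lt_trans one_pos hp
  have hq0 : 0 < q := lt_trans one_pos hq
  have hpq2 : p + q = p * q := by field_simp at hpq; linarith
  have hconj : Real.HolderConjugate p q := Real.holderConjugate_iff.mpr ⟨hp, by rw [← one_div, ← one_div]; exact hpq⟩
  set ε : ℝ := 1 / (2 * q) with hε
  set b : ℝ := p / (2 * q) with hb
  have hεq : -ε * q = -(1/2) := by rw [hε]; field_simp
  have hεp : ε * p = b := by rw [hε, hb]; ring
  have hbval : b = (p - 1) / 2 := by
    rw [hb]; rw [div_eq_div_iff (by positivity) (by norm_num)]; nlinarith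
  set β : ℝ := b - p with hβ
  have hβlt : β < -1 := by rw [hβ, hbval]; nlinarith
  have hβ1 : β + 1 = -((p-1)/2) := by rw [hβ, hbval]; ring
  set Gq := GNorm q g ^ q with hGqdef
  set Φ : ℝ → ℝ≥0∞ := fun x => ∫⁻ t in Set.Ioc (0:ℝ) x,
      ENNReal.ofReal |f t| ^ p * ENNReal.ofReal (t ^ b) with hΦ
  set G1 : ℝ → ℝ≥0∞ := fun t => ENNReal.ofReal (|g t| * t ^ (-ε)) with hG1
  set F1 : ℝ → ℝ≥0∞ := fun t => ENNReal.ofReal (|f t| * t ^ ε) with hF1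
  have hG1m : Measurable G1 := ENNReal.measurable_ofReal.comp
    (hg.abs.mul (measurable_id.pow measurable_const))
  have hF1m : Measurable F1 := ENNReal.measurable_ofReal.comp
    (hf.abs.mul (measurable_id.pow measurable_const))
  -- pointwise Hoelder
  have holder : ∀ x : ℝ, 0 < x → (∫⁻ t in Set.Ioc (0:ℝ) x, ENNReal.ofReal |g t * f t|) ≤
      (2 * Gq * ENNReal.ofReal (x ^ ((1:ℝ)/2))) ^ (1/q) * (Φ x) ^ (1/p) := by
    intro x hx
    have e0 : (∫⁻ t in Set.Ioc (0:ℝ) x, ENNReal.ofReal |g t * f t|) =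
        ∫⁻ t in Set.Ioc (0:ℝ) x, (F1 * G1) t := by
      refine setLIntegral_congr_fun measurableSet_Ioc (fun t ht => ?_)
      have h1 : t ^ ε * t ^ (-ε) = 1 := by
        rw [← Real.rpow_add ht.1]; simp
      have h2 : |g t * f t| = (|f t| * t ^ ε) * (|g t| * t ^ (-ε)) := by
        rw [abs_mul]
        calc |g t| * |f t| = |f t| * |g t| * (t ^ ε * t ^ (-ε)) := by rw [h1]; ring
          _ = (|f t| * t ^ ε) * (|g t| * t ^ (-ε)) := by ring
      simp only [Pi.mul_apply, hF1, hG1]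
      rw [h2, ENNReal.ofReal_mul (mul_nonneg (abs_nonneg _) (Real.rpow_nonneg ht.1.le _))]
    have e1 : (∫⁻ t in Set.Ioc (0:ℝ) x, F1 t ^ p) = Φ x := by
      refine setLIntegral_congr_fun measurableSet_Ioc (fun t ht => ?_)
      simp only [hF1]
      rw [ENNReal.ofReal_rpow_of_nonneg (mul_nonneg (abs_nonneg _)
          (Real.rpow_nonneg ht.1.le _)) hp0.le,
        Real.mul_rpow (abs_nonneg _) (Real.rpow_nonneg ht.1.le _),
        ← Real.rpow_mul ht.1.le, hεp,
        ENNReal.ofReal_mul (Real.rpow_nonneg (abs_nonneg _) _),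
        ← ENNReal.ofReal_rpow_of_nonneg (abs_nonneg _) hp0.le]
    have e2 : (∫⁻ t in Set.Ioc (0:ℝ) x, G1 t ^ q) =
        ∫⁻ t in Set.Ioc (0:ℝ) x, ENNReal.ofReal |g t| ^ q * ENNReal.ofReal (t ^ (-(1/2):ℝ)) := by
      refine setLIntegral_congr_fun measurableSet_Ioc (fun t ht => ?_)
      simp only [hG1]
      rw [ENNReal.ofReal_rpow_of_nonneg (mul_nonneg (abs_nonneg _)
          (Real.rpow_nonneg ht.1.le _)) hq0.le,
        Real.mul_rpow (abs_nonneg _) (Real.rpow_nonneg ht.1.le _),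
        ← Real.rpow_mul ht.1.le, hεq,
        ENNReal.ofReal_mul (Real.rpow_nonneg (abs_nonneg _) _),
        ← ENNReal.ofReal_rpow_of_nonneg (abs_nonneg _) hq0.le]
    calc (∫⁻ t in Set.Ioc (0:ℝ) x, ENNReal.ofReal |g t * f t|)
        = ∫⁻ t in Set.Ioc (0:ℝ) x, (F1 * G1) t := e0
      _ ≤ (∫⁻ t in Set.Ioc (0:ℝ) x, F1 t ^ p) ^ (1/p) *
            (∫⁻ t in Set.Ioc (0:ℝ) x, G1 t ^ q) ^ (1/q) :=
          ENNReal.lintegral_mul_le_Lp_mul_Lq _ hconj hF1m.aemeasurable hG1m.aemeasurable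
      _ ≤ (2 * Gq * ENNReal.ofReal (x ^ ((1:ℝ)/2))) ^ (1/q) * (Φ x) ^ (1/p) := by
          rw [e1, e2, mul_comm]
          exact mul_le_mul_left (ENNReal.rpow_le_rpow (lemA g hg hq0 hx)
            (by positivity : (0:ℝ) ≤ 1/q)) _
  set ψ : ℝ → ℝ≥0∞ := fun t => ENNReal.ofReal |f t| ^ p * ENNReal.ofReal (t ^ b) with hψdef
  have hψm : Measurable ψ := ((ENNReal.measurable_ofReal.comp hf.abs).pow measurable_const).mul
    (ENNReal.measurable_ofReal.comp (measurable_id.pow measurable_const))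
  have hΦm : Measurable Φ := by
    have : Monotone Φ := fun u v huv => lintegral_mono_set (Set.Ioc_subset_Ioc_right huv)
    exact this.measurable
  set φβ : ℝ → ℝ≥0∞ := fun s => ENNReal.ofReal s ^ β with hφβdef
  have hφβm : Measurable φβ := ENNReal.measurable_ofReal.pow measurable_const
  have hLp : (∫⁻ t in Set.Ioi (0:ℝ), ENNReal.ofReal |f t| ^ p) ≤ 1 := by
    have h := ENNReal.rpow_le_rpow hf1 hp0.le
    rwa [LpNorm, ← ENNReal.rpow_mul, one_div, inv_mul_cancel₀ hp0.ne', ENNReal.rpow_one,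
      ENNReal.one_rpow] at h
  have key2 : (∫⁻ x in Set.Ioi (0:ℝ), φβ x * Φ x) ≤ ENNReal.ofReal (2 / (p - 1)) := by
    rw [← swap_lemma ψ φβ hψm hφβm]
    have e4 : ∀ t ∈ Set.Ioi (0:ℝ), ψ t * (∫⁻ s in Set.Ioi t, φβ s) =
        ENNReal.ofReal |f t| ^ p * ENNReal.ofReal (2 / (p - 1)) := by
      intro t ht
      have ht0 : (0:ℝ) < t := ht
      have einner : (∫⁻ s in Set.Ioi t, φβ s) = ENNReal.ofReal (-t ^ (β+1) / (β+1)) := by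
        have hc : ∀ s ∈ Set.Ioi t, φβ s = ENNReal.ofReal (s ^ β) := fun s hs =>
          ENNReal.ofReal_rpow_of_pos (lt_trans ht0 hs)
        rw [setLIntegral_congr_fun measurableSet_Ioi hc, lintIoi hβlt ht0]
      rw [einner, hψdef]
      have hp1 : p - 1 ≠ 0 := by linarith
      have hreal : t ^ b * (-t ^ (β+1) / (β+1)) = 2 / (p-1) := by
        rw [hβ1, div_neg, neg_div, neg_neg, div_eq_mul_inv,
          show (((p-1)/2)⁻¹ : ℝ) = 2/(p-1) by field_simp, ← mul_assoc,
          ← Real.rpow_add ht0, show b + -((p-1)/2) = 0 by rw [hbval]; ring,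
          Real.rpow_zero, one_mul]
      rw [mul_assoc, ← ENNReal.ofReal_mul (Real.rpow_nonneg ht0.le _), hreal]
    rw [setLIntegral_congr_fun measurableSet_Ioi e4,
      lintegral_mul_const' _ _ ENNReal.ofReal_ne_top]
    calc (∫⁻ t in Set.Ioi (0:ℝ), ENNReal.ofReal |f t| ^ p) * ENNReal.ofReal (2/(p-1))
        ≤ 1 * ENNReal.ofReal (2/(p-1)) := mul_le_mul_left hLp _
      _ = ENNReal.ofReal (2/(p-1)) := one_mul _
  -- main integral bound
  have main : (∫⁻ x in Set.Ioi (0:ℝ),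
      ((ENNReal.ofReal x)⁻¹ * ∫⁻ t in Set.Ioc (0:ℝ) x, ENNReal.ofReal |g t * f t|) ^ p) ≤
      (2 * Gq) ^ ((1:ℝ)/q * p) * ENNReal.ofReal (2 / (p - 1)) := by
    have hpt : ∀ x ∈ Set.Ioi (0:ℝ),
        ((ENNReal.ofReal x)⁻¹ * ∫⁻ t in Set.Ioc (0:ℝ) x, ENNReal.ofReal |g t * f t|) ^ p ≤
        (2 * Gq) ^ ((1:ℝ)/q * p) * (φβ x * Φ x) := by
      intro x hx
      have hx0 : (0:ℝ) < x := hx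
      have h1 := ENNReal.rpow_le_rpow (mul_le_mul_right (holder x hx0) (ENNReal.ofReal x)⁻¹) hp0.le
      refine h1.trans (le_of_eq ?_)
      have h2 := helper (ENNReal.ofReal x) Gq (Φ x) (by simpa using hx0) ENNReal.ofReal_ne_top
        (β := β) hp0 hq0 (by rw [hβ, hb]; field_simp; ring)
      rw [← ENNReal.ofReal_rpow_of_pos hx0, h2, hφβdef]
    calc (∫⁻ x in Set.Ioi (0:ℝ),
        ((ENNReal.ofReal x)⁻¹ * ∫⁻ t in Set.Ioc (0:ℝ) x, ENNReal.ofReal |g t * f t|) ^ p)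
        ≤ ∫⁻ x in Set.Ioi (0:ℝ), (2 * Gq) ^ ((1:ℝ)/q * p) * (φβ x * Φ x) :=
          setLIntegral_mono' measurableSet_Ioi hpt
      _ = (2 * Gq) ^ ((1:ℝ)/q * p) * ∫⁻ x in Set.Ioi (0:ℝ), φβ x * Φ x := by
          rw [lintegral_const_mul (f := fun x => φβ x * Φ x) _ (hφβm.mul hΦm)]
      _ ≤ (2 * Gq) ^ ((1:ℝ)/q * p) * ENNReal.ofReal (2 / (p - 1)) := mul_le_mul_right key2 _
  -- conclude
  have final : CesNorm p (fun t => g t * f t) ≤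
      ((2 * Gq) ^ ((1:ℝ)/q * p) * ENNReal.ofReal (2 / (p - 1))) ^ ((1:ℝ)/p) := by
    rw [CesNorm]
    exact ENNReal.rpow_le_rpow main (by positivity)
  refine final.trans (le_of_eq ?_)
  rw [ENNReal.mul_rpow_of_nonneg _ _ (by positivity : (0:ℝ) ≤ 1/p), ← ENNReal.rpow_mul,
    show ((1:ℝ)/q * p) * (1/p) = 1/q by field_simp,
    ENNReal.mul_rpow_of_nonneg _ _ (by positivity : (0:ℝ) ≤ 1/q), hGqdef,
    ← ENNReal.rpow_mul, show q * ((1:ℝ)/q) = 1 by field_simp, ENNReal.rpow_one]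
  ring

lemma rpow_iSup (h : ℕ → ℝ≥0∞) {y : ℝ} (hy : 0 < y) : (⨆ n, h n) ^ y = ⨆ n, h n ^ y := by
  have := (ENNReal.orderIsoRpow y hy).map_iSup h
  simp only [ENNReal.orderIsoRpow_apply] at this
  exact this

lemma lemLower (p q : ℝ) (hp : 1 < p) (hq : 1 < q) (hpq : 1 / p + 1 / q = 1)
    (g : ℝ → ℝ) (hg : Measurable g) :
    ENNReal.ofReal (1/2) * GNorm q g ≤
      ⨆ (f : ℝ → ℝ) (_ : Measurable f) (_ : LpNorm p f ≤ 1),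
        CesNorm p (fun t => g t * f t) := by
  have hp0 : 0 < p := lt_trans one_pos hp
  have hq0 : 0 < q := lt_trans one_pos hq
  have hpq2 : p + q = p * q := by field_simp at hpq; linarith
  have hqp : (q - 1) * p = q := by nlinarith
  have hhalf : ENNReal.ofReal (1/2 : ℝ) = 2⁻¹ := by
    rw [one_div, ENNReal.ofReal_inv_of_pos (by norm_num)]
    norm_num
  set S := ⨆ (f : ℝ → ℝ) (_ : Measurable f) (_ : LpNorm p f ≤ 1),
      CesNorm p (fun t => g t * f t) with hS
  set A : ℝ → ℕ → ℝ≥0∞ := fun x n => ∫⁻ t in Set.Ioc (0:ℝ) x,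
      ENNReal.ofReal (min |g t| (n:ℝ)) ^ q with hA
  -- Step 1
  have claim1 : ∀ x : ℝ, 0 < x → ∀ n : ℕ,
      ENNReal.ofReal (1/2) * ((ENNReal.ofReal x)⁻¹ * A x n) ^ ((1:ℝ)/q) ≤ S := by
    intro x hx n
    by_cases hA0 : A x n = 0
    · rw [hA0, mul_zero, ENNReal.zero_rpow_of_pos (by positivity), mul_zero]
      exact zero_le
    have hAtop : A x n ≠ ⊤ := by
      have hb : A x n ≤ ENNReal.ofReal (n:ℝ) ^ q * volume (Set.Ioc (0:ℝ) x) := by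
        rw [← setLIntegral_const]
        exact setLIntegral_mono' measurableSet_Ioc fun t _ =>
          ENNReal.rpow_le_rpow (ENNReal.ofReal_le_ofReal (min_le_right _ _)) hq0.le
      refine ne_top_of_le_ne_top ?_ hb
      exact ENNReal.mul_ne_top (ENNReal.rpow_ne_top_of_nonneg hq0.le ENNReal.ofReal_ne_top)
        (by simp [Real.volume_Ioc])
    have hApos : 0 < (A x n).toReal := ENNReal.toReal_pos hA0 hAtop
    set r : ℝ := (A x n).toReal ^ (-(1/p) : ℝ) with hr
    have hr0 : 0 < r := Real.rpow_pos_of_pos hApos _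
    have hofr : ENNReal.ofReal r = A x n ^ (-(1/p) : ℝ) := by
      rw [hr, ← ENNReal.ofReal_rpow_of_pos hApos, ENNReal.ofReal_toReal hAtop]
    set f : ℝ → ℝ := fun t => if t ∈ Set.Ioc (0:ℝ) x then (min |g t| (n:ℝ)) ^ (q-1) * r else 0
      with hf
    have hgn0 : ∀ t, 0 ≤ min |g t| (n:ℝ) := fun t => le_min (abs_nonneg _) (Nat.cast_nonneg n)
    have hfm : Measurable f := Measurable.ite measurableSet_Ioc
      (((hg.abs.min measurable_const).pow measurable_const).mul_const r) measurable_const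
    -- integrand identity
    have hint : ∀ t, ENNReal.ofReal |f t| ^ p =
        (Set.Ioc (0:ℝ) x).indicator
          (fun t => ENNReal.ofReal (min |g t| (n:ℝ)) ^ q * ENNReal.ofReal r ^ p) t := by
      intro t
      by_cases h : t ∈ Set.Ioc (0:ℝ) x
      · rw [Set.indicator_of_mem h, hf]
        simp only [if_pos h]
        rw [abs_of_nonneg (mul_nonneg (Real.rpow_nonneg (hgn0 t) _) hr0.le),
          ENNReal.ofReal_mul (Real.rpow_nonneg (hgn0 t) _),
          ENNReal.mul_rpow_of_nonneg _ _ hp0.le,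
          ← ENNReal.ofReal_rpow_of_nonneg (hgn0 t) (by linarith : (0:ℝ) ≤ q - 1),
          ← ENNReal.rpow_mul, hqp]
      · rw [Set.indicator_of_notMem h, hf]
        simp only [if_neg h, abs_zero, ENNReal.ofReal_zero]
        exact ENNReal.zero_rpow_of_pos hp0
    have hLpint : (∫⁻ t in Set.Ioi (0:ℝ), ENNReal.ofReal |f t| ^ p) = 1 := by
      calc (∫⁻ t in Set.Ioi (0:ℝ), ENNReal.ofReal |f t| ^ p)
          = ∫⁻ t in Set.Ioi (0:ℝ), (Set.Ioc (0:ℝ) x).indicator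
              (fun t => ENNReal.ofReal (min |g t| (n:ℝ)) ^ q * ENNReal.ofReal r ^ p) t :=
            lintegral_congr fun t => hint t
        _ = ∫⁻ t in Set.Ioc (0:ℝ) x,
              ENNReal.ofReal (min |g t| (n:ℝ)) ^ q * ENNReal.ofReal r ^ p := by
            rw [lintegral_indicator measurableSet_Ioc,
              Measure.restrict_restrict measurableSet_Ioc,
              Set.inter_eq_left.mpr (fun t ht => ht.1)]
        _ = A x n * ENNReal.ofReal r ^ p := by
            rw [lintegral_mul_const' _ _
              (ENNReal.rpow_ne_top_of_nonneg hp0.le ENNReal.ofReal_ne_top)]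
        _ = 1 := by
            rw [hofr, ← ENNReal.rpow_mul,
              show (-(1/p)) * p = -1 by field_simp, ENNReal.rpow_neg_one,
              ENNReal.mul_inv_cancel hA0 hAtop]
    have hLpf : LpNorm p f ≤ 1 := by
      rw [LpNorm, hLpint, ENNReal.one_rpow]
    -- lower bound for inner integral
    have hinner : ∀ y : ℝ, x ≤ y →
        A x n ^ ((1:ℝ)/q) ≤ ∫⁻ t in Set.Ioc (0:ℝ) y, ENNReal.ofReal |g t * f t| := by
      intro y hy
      have e5 : A x n ^ ((1:ℝ)/q) = ∫⁻ t in Set.Ioc (0:ℝ) x,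
          ENNReal.ofReal (min |g t| (n:ℝ)) ^ q * ENNReal.ofReal r := by
        have e6 : A x n * A x n ^ (-(1/p):ℝ) = A x n ^ ((1:ℝ)/q) := by
          nth_rewrite 1 [← ENNReal.rpow_one (A x n)]
          rw [← ENNReal.rpow_add _ _ hA0 hAtop]
          congr 1
          linarith [hpq]
        rw [lintegral_mul_const' _ _ ENNReal.ofReal_ne_top, hofr, ← e6]
      rw [e5]
      refine le_trans (setLIntegral_mono' measurableSet_Ioc fun t ht => ?_)
        (lintegral_mono_set (Set.Ioc_subset_Ioc_right hy))
      have h6 : min |g t| (n:ℝ) ^ q * r ≤ |g t * f t| := by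
        rw [abs_mul, hf]
        simp only [if_pos ht]
        rw [abs_of_nonneg (mul_nonneg (Real.rpow_nonneg (hgn0 t) _) hr0.le)]
        have hsplit : min |g t| (n:ℝ) ^ q = min |g t| (n:ℝ) ^ (1:ℝ) * min |g t| (n:ℝ) ^ (q-1) := by
          rw [← Real.rpow_add' (hgn0 t) (ne_of_gt (by linarith : (0:ℝ) < 1 + (q-1)))]
          norm_num
        rw [hsplit, Real.rpow_one, mul_assoc]
        exact mul_le_mul_of_nonneg_right (min_le_left _ _)
          (mul_nonneg (Real.rpow_nonneg (hgn0 t) _) hr0.le)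
      calc ENNReal.ofReal (min |g t| (n:ℝ)) ^ q * ENNReal.ofReal r
          = ENNReal.ofReal (min |g t| (n:ℝ) ^ q * r) := by
            rw [ENNReal.ofReal_mul (Real.rpow_nonneg (hgn0 t) _),
              ENNReal.ofReal_rpow_of_nonneg (hgn0 t) hq0.le]
        _ ≤ ENNReal.ofReal |g t * f t| := ENNReal.ofReal_le_ofReal h6
    -- Cesàro norm lower bound
    have hx0 : ENNReal.ofReal x ≠ 0 := by simpa using hx
    have hxt : ENNReal.ofReal x ≠ ⊤ := ENNReal.ofReal_ne_top
    set a : ℝ≥0∞ := ENNReal.ofReal x with ha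
    set cst : ℝ≥0∞ := ((ENNReal.ofReal (2*x))⁻¹ * A x n ^ ((1:ℝ)/q)) ^ p with hcst
    have h7 : cst * a ≤ ∫⁻ y in Set.Ioi (0:ℝ),
        ((ENNReal.ofReal y)⁻¹ * ∫⁻ t in Set.Ioc (0:ℝ) y, ENNReal.ofReal |g t * f t|) ^ p := by
      have h5 : ∀ y ∈ Set.Ioc x (2*x), cst ≤
          ((ENNReal.ofReal y)⁻¹ * ∫⁻ t in Set.Ioc (0:ℝ) y, ENNReal.ofReal |g t * f t|) ^ p := by
        intro y hy
        refine ENNReal.rpow_le_rpow (mul_le_mul' ?_ (hinner y hy.1.le)) hp0.le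
        exact ENNReal.inv_le_inv.mpr (ENNReal.ofReal_le_ofReal hy.2)
      calc cst * a = ∫⁻ _ in Set.Ioc x (2*x), cst := by
            rw [setLIntegral_const, Real.volume_Ioc, show 2*x - x = x by ring]
        _ ≤ ∫⁻ y in Set.Ioc x (2*x),
              ((ENNReal.ofReal y)⁻¹ * ∫⁻ t in Set.Ioc (0:ℝ) y,
                ENNReal.ofReal |g t * f t|) ^ p := setLIntegral_mono' measurableSet_Ioc h5
        _ ≤ _ := lintegral_mono_set (fun y hy => lt_trans hx hy.1)
    have h8 : (cst * a) ^ ((1:ℝ)/p) ≤ CesNorm p (fun t => g t * f t) := by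
      rw [CesNorm]
      exact ENNReal.rpow_le_rpow h7 (by positivity)
    have halg : ENNReal.ofReal (1/2) * ((ENNReal.ofReal x)⁻¹ * A x n) ^ ((1:ℝ)/q) =
        (cst * a) ^ ((1:ℝ)/p) := by
      rw [hcst, ENNReal.mul_rpow_of_nonneg _ _ (by positivity : (0:ℝ) ≤ 1/p),
        ← ENNReal.rpow_mul, show p * ((1:ℝ)/p) = 1 by field_simp, ENNReal.rpow_one]
      rw [show (2*x : ℝ) = 2 * x from rfl, ENNReal.ofReal_mul (by norm_num : (0:ℝ) ≤ 2),
        ENNReal.ofReal_ofNat, ← ha,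
        ENNReal.mul_inv (Or.inl (by norm_num)) (Or.inl ENNReal.ofNat_ne_top)]
      rw [ENNReal.mul_rpow_of_nonneg _ _ (by positivity : (0:ℝ) ≤ 1/q), hhalf]
      rw [show (a⁻¹ : ℝ≥0∞) ^ ((1:ℝ)/q) = a⁻¹ * a ^ ((1:ℝ)/p) from ?_]
      · ring
      rw [← ENNReal.rpow_neg_one a, ← ENNReal.rpow_mul, ← ENNReal.rpow_add _ _ hx0 hxt]
      congr 1
      have : 1/p + 1/q = 1 := hpq
      nlinarith
    rw [halg]
    refine le_trans h8 ?_
    refine le_iSup_of_le f ?_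
    refine le_iSup_of_le hfm ?_
    exact le_iSup_of_le hLpf le_rfl
  -- Step 2 : monotone convergence in n
  have claim2 : ∀ x : ℝ, 0 < x → ENNReal.ofReal (1/2) * ((ENNReal.ofReal x)⁻¹ *
      ∫⁻ t in Set.Ioc (0:ℝ) x, ENNReal.ofReal |g t| ^ q) ^ (1/q) ≤ S := by
    intro x hx
    have hmeas : ∀ n : ℕ, Measurable (fun t : ℝ => ENNReal.ofReal (min |g t| (n:ℝ)) ^ q) :=
      fun n => (ENNReal.measurable_ofReal.comp (hg.abs.min measurable_const)).pow measurable_const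
    have hmono : Monotone (fun (n : ℕ) (t : ℝ) => ENNReal.ofReal (min |g t| (n:ℝ)) ^ q) := by
      intro m n hmn
      intro t
      exact ENNReal.rpow_le_rpow (ENNReal.ofReal_le_ofReal
        (min_le_min le_rfl (by exact_mod_cast hmn))) hq0.le
    have hmct : (⨆ n : ℕ, A x n) = ∫⁻ t in Set.Ioc (0:ℝ) x, ENNReal.ofReal |g t| ^ q := by
      rw [hA, ← lintegral_iSup hmeas hmono]
      refine setLIntegral_congr_fun measurableSet_Ioc (fun t _ => ?_)
      apply le_antisymm
      · exact iSup_le fun m =>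
          ENNReal.rpow_le_rpow (ENNReal.ofReal_le_ofReal (min_le_left _ _)) hq0.le
      · refine le_iSup_of_le ⌈|g t|⌉₊ (le_of_eq ?_)
        rw [min_eq_left (Nat.le_ceil _)]
    calc ENNReal.ofReal (1/2) * ((ENNReal.ofReal x)⁻¹ *
          ∫⁻ t in Set.Ioc (0:ℝ) x, ENNReal.ofReal |g t| ^ q) ^ (1/q)
        = ⨆ n : ℕ, ENNReal.ofReal (1/2) * ((ENNReal.ofReal x)⁻¹ * A x n) ^ ((1:ℝ)/q) := by
          rw [← hmct, ENNReal.mul_iSup (ENNReal.ofReal x)⁻¹,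
            rpow_iSup _ (by positivity : (0:ℝ) < 1/q), ENNReal.mul_iSup]
      _ ≤ S := iSup_le fun n => claim1 x hx n
  rw [GNorm, ENNReal.mul_iSup]
  refine iSup_le fun x => ?_
  rw [ENNReal.mul_iSup]
  exact iSup_le fun hx => claim2 x hx

end AuxLemmas

/-- Identification of the multiplier space `M(L_p, Ces_p)` with the space
`G_q = (Ces_∞)^{(q)}`. -/
theorem stmt_9 (p q : ℝ) (hp : 1 < p) (hpq : 1 / p + 1 / q = 1) :
    ∃ c C : ℝ, 0 < c ∧ 0 < C ∧ ∀ g : ℝ → ℝ, Measurable g →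
      ENNReal.ofReal c * GNorm q g ≤
          (⨆ (f : ℝ → ℝ) (_ : Measurable f) (_ : LpNorm p f ≤ 1),
            CesNorm p (fun t => g t * f t)) ∧
        (⨆ (f : ℝ → ℝ) (_ : Measurable f) (_ : LpNorm p f ≤ 1),
            CesNorm p (fun t => g t * f t)) ≤
          ENNReal.ofReal C * GNorm q g := by
  have hp0 : 0 < p := lt_trans one_pos hp
  have hp1 : 0 < p - 1 := by linarith
  have hq0 : 0 < q := by
    have h1 : 1/q = 1 - 1/p := by linarith
    have h2 : (0:ℝ) < 1/q := by
      rw [h1]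
      have h3 : 1/p < 1 := by rw [div_lt_one hp0]; exact hp
      linarith
    exact one_div_pos.mp h2
  have hq : 1 < q := by
    have h3 : 1/q < 1 := by
      have : (0:ℝ) < 1/p := by positivity
      linarith
    rwa [div_lt_one hq0] at h3
  refine ⟨1/2, 2 ^ ((1:ℝ)/q) * (2/(p-1)) ^ ((1:ℝ)/p), by norm_num, by positivity, ?_⟩
  intro g hg
  constructor
  · exact lemLower p q hp hq hpq g hg
  · refine iSup_le fun f => iSup_le fun hf => iSup_le fun hf1 => ?_
    refine (lemUpper p q hp hq hpq g f hg hf hf1).trans (le_of_eq ?_)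
    congr 1
    rw [ENNReal.ofReal_mul (by positivity), ← ENNReal.ofReal_rpow_of_pos (by norm_num : (0:ℝ) < 2),
      ← ENNReal.ofReal_rpow_of_pos (by positivity : (0:ℝ) < 2/(p-1)), ENNReal.ofReal_ofNat]
end
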